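/- arXiv:0902.4806 — 5 statements merged into one kernel-verified Lean document; each statement's English description precedes it below -/
import Mathlib

section
/- Let σ > 0, μ ≥ 0, A > 0, and B, C be real with σ² + 2C > 0, and set ν = √(σ² + 2C)/σ; assume ν is not an integer. Let f : (0,∞) → ℝ be differentiable and satisfy the Riccati equation σ x f'(x) − σ f(x) + (1/2) f(x)² + 2σμ x² = (1/2) A x² + B x + C for all x > 0, and let F : (0,∞) → ℝ be differentiable with F'(x) = f(x)/x. Fix y > 0 and real constants C₁, C₂, and define for t > 0, x > 0: p(t,x,y) = ( √(Axy) / (2σ sinh(√A t/2)) ) e^{ −(F(x) − F(y))/(2σ) } exp( −Bt/(2σ) − √A (x+y)/(2σ tanh(√A t/2)) ) · ( C₁ I_ν( √(Axy)/(σ sinh(√A t/2)) ) + C₂ I_{−ν}( √(Axy)/(σ sinh(√A t/2)) ) ). Then for all t > 0 and x > 0, ∂_t p = σ x ∂²_x p + f(x) ∂_x p − μ x p. -/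
open Real MeasureTheory

/-- The modified Bessel function of the first kind,
`I_ν(z) = ∑_{k=0}^∞ (z/2)^{2k+ν} / (k! Γ(k+ν+1))`. -/
noncomputable def besselI (ν z : ℝ) : ℝ :=
  ∑' k : ℕ, (z / 2) ^ (2 * (k : ℝ) + ν) / ((Nat.factorial k : ℝ) * Real.Gamma ((k : ℝ) + ν + 1))

open Filter Topology

/-- coefficient of the Bessel-type power series -/
noncomputable def bc (ν : ℝ) (k : ℕ) : ℝ :=
  ((Nat.factorial k : ℝ) * Real.Gamma ((k : ℝ) + ν + 1))⁻¹

lemma bc_ne_zero {ν : ℝ} (hν : ∀ n : ℤ, ν ≠ (n : ℝ)) (k : ℕ) : bc ν k ≠ 0 := by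
  have h1 : (Nat.factorial k : ℝ) ≠ 0 := Nat.cast_ne_zero.2 (Nat.factorial_ne_zero k)
  have h2 : Real.Gamma ((k : ℝ) + ν + 1) ≠ 0 := by
    apply Real.Gamma_ne_zero
    intro m hm
    apply hν (-(m : ℤ) - (k : ℤ) - 1)
    push_cast
    linarith
  simp [bc, h1, h2]

lemma natadd_ne_zero {ν : ℝ} (hν : ∀ n : ℤ, ν ≠ (n : ℝ)) (k : ℕ) : (k : ℝ) + ν + 1 ≠ 0 := by
  intro h
  exact hν (-(k:ℤ) - 1) (by push_cast; linarith)

lemma bc_rec {ν : ℝ} (hν : ∀ n : ℤ, ν ≠ (n : ℝ)) (k : ℕ) :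
    ((k : ℝ) + 1) * ((k : ℝ) + ν + 1) * bc ν (k + 1) = bc ν k := by
  have h2 : Real.Gamma (((k : ℕ) : ℝ) + ν + 1 + 1) = ((k : ℝ) + ν + 1) * Real.Gamma ((k : ℝ) + ν + 1) :=
    Real.Gamma_add_one (natadd_ne_zero hν k)
  have h3 : (((k+1 : ℕ)) : ℝ) + ν + 1 = ((k : ℝ) + ν + 1) + 1 := by push_cast; ring
  have h1 : (Nat.factorial k : ℝ) ≠ 0 := Nat.cast_ne_zero.2 (Nat.factorial_ne_zero k)
  have hg : Real.Gamma ((k : ℝ) + ν + 1) ≠ 0 := by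
    apply Real.Gamma_ne_zero
    intro m hm
    exact hν (-(m : ℤ) - (k : ℤ) - 1) (by push_cast; linarith)
  have hk1 : ((k : ℝ) + 1) ≠ 0 := by positivity
  have hz := natadd_ne_zero hν k
  rw [bc, bc, h3, h2, Nat.factorial_succ]
  push_cast
  rw [mul_inv, mul_inv, mul_inv]
  field_simp

lemma summable_ratio (c : ℕ → ℝ) (hc0 : ∀ k, c k ≠ 0)
    (hrat : Tendsto (fun k => |c (k + 1)| / |c k|) atTop (𝓝 0)) (u : ℝ) :
    Summable (fun k => c k * u ^ k) := by
  apply summable_of_ratio_norm_eventually_le (r := 1/2) (by norm_num)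
  have h1 : Tendsto (fun k => |c (k + 1)| / |c k| * |u|) atTop (𝓝 0) := by
    simpa using hrat.mul_const |u|
  filter_upwards [h1.eventually_le_const (by norm_num : (0:ℝ) < 1/2)] with k hk
  have hck : |c k| ≠ 0 := abs_ne_zero.2 (hc0 k)
  have : ‖c (k + 1) * u ^ (k + 1)‖ = (|c (k + 1)| / |c k| * |u|) * ‖c k * u ^ k‖ := by
    simp only [Real.norm_eq_abs, abs_mul, abs_pow, pow_succ]
    field_simp
  rw [this]
  exact mul_le_mul_of_nonneg_right hk (norm_nonneg _)

lemma shift_ne_zero (c : ℕ → ℝ) (hc0 : ∀ k, c k ≠ 0) (k : ℕ) :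
    ((k : ℝ) + 1) * c (k + 1) ≠ 0 :=
  mul_ne_zero (by positivity) (hc0 _)

lemma shift_ratio (c : ℕ → ℝ) (hc0 : ∀ k, c k ≠ 0)
    (hrat : Tendsto (fun k => |c (k + 1)| / |c k|) atTop (𝓝 0)) :
    Tendsto (fun k : ℕ => |(((k + 1 : ℕ) : ℝ) + 1) * c (k + 1 + 1)| / |((k : ℝ) + 1) * c (k + 1)|)
      atTop (𝓝 0) := by
  have hg : Tendsto (fun k => 2 * (|c (k + 1 + 1)| / |c (k + 1)|)) atTop (𝓝 0) := by
    simpa using ((hrat.comp (tendsto_add_atTop_nat 1)).const_mul 2)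
  apply squeeze_zero (fun k => by positivity) _ hg
  intro k
  have h1 : |(((k + 1 : ℕ) : ℝ) + 1) * c (k + 1 + 1)| / |((k : ℝ) + 1) * c (k + 1)|
      = (((k : ℝ) + 2) / ((k : ℝ) + 1)) * (|c (k + 1 + 1)| / |c (k + 1)|) := by
    push_cast
    rw [abs_mul, abs_mul, abs_of_pos (by positivity : (0:ℝ) < (k : ℝ) + 1 + 1),
      abs_of_pos (by positivity : (0:ℝ) < (k : ℝ) + 1)]
    rw [div_mul_div_comm]
    ring_nf
  rw [h1]
  have h2 : ((k : ℝ) + 2) / ((k : ℝ) + 1) ≤ 2 := by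
    rw [div_le_iff₀ (by positivity)]; linarith
  exact mul_le_mul_of_nonneg_right h2 (by positivity)

lemma hasDerivAt_series (c : ℕ → ℝ) (hc0 : ∀ k, c k ≠ 0)
    (hrat : Tendsto (fun k => |c (k + 1)| / |c k|) atTop (𝓝 0)) (u : ℝ) :
    HasDerivAt (fun v => ∑' k : ℕ, c k * v ^ k)
      (∑' k : ℕ, ((k : ℝ) + 1) * c (k + 1) * u ^ k) u := by
  set R : ℝ := |u| + 1 with hR
  have hR1 : (1:ℝ) ≤ R := by rw [hR]; linarith [abs_nonneg u]
  have hbound : Summable (fun n : ℕ => (n : ℝ) * |c n| * R ^ (n - 1)) := by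
    rw [← summable_nat_add_iff 1]
    have := (summable_ratio (fun k => ((k : ℝ) + 1) * c (k + 1))
      (shift_ne_zero c hc0) (shift_ratio c hc0 hrat) R).abs
    apply this.congr
    intro n
    simp only [Nat.add_sub_cancel]
    rw [abs_mul, abs_mul, abs_of_nonneg (show (0:ℝ) ≤ (n:ℝ)+1 by positivity), abs_pow,
      abs_of_nonneg (show (0:ℝ) ≤ R by positivity)]
    push_cast
    ring
  have key : HasDerivAt (fun v => ∑' k, c k * v ^ k)
      (∑' n, c n * ((n : ℝ) * u ^ (n - 1))) u := by
    apply hasDerivAt_tsum_of_isPreconnected hbound (Metric.isOpen_ball)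
      (convex_ball (0:ℝ) R).isPreconnected
      (g := fun n v => c n * v ^ n) (g' := fun n v => c n * ((n : ℝ) * v ^ (n - 1)))
      (y₀ := 0) (y := u)
    · intro n v _
      exact (hasDerivAt_pow n v).const_mul (c n)
    · intro n v hv
      have hvR : |v| ≤ R := by
        have := mem_ball_iff_norm.1 hv
        simp only [sub_zero, Real.norm_eq_abs] at this
        linarith
      have hv0 : (0:ℝ) ≤ |v| := abs_nonneg v
      calc ‖c n * ((n : ℝ) * v ^ (n - 1))‖ = (n : ℝ) * |c n| * |v| ^ (n - 1) := by
            rw [Real.norm_eq_abs, abs_mul, abs_mul, abs_pow, abs_of_nonneg (by positivity : (0:ℝ) ≤ (n:ℝ))]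
            ring
        _ ≤ (n : ℝ) * |c n| * R ^ (n - 1) := by gcongr
    · simp only [Metric.mem_ball, Real.dist_eq, sub_zero, abs_zero, hR]
      positivity
    · exact summable_ratio c hc0 hrat 0
    · simp only [Metric.mem_ball, Real.dist_eq, sub_zero, hR]
      linarith [le_abs_self u, abs_nonneg u]
  have hsum' : Summable (fun n => c n * ((n : ℝ) * u ^ (n - 1))) := by
    apply Summable.of_norm_bounded hbound
    intro n
    have hu0 : (0:ℝ) ≤ |u| := abs_nonneg u
    calc ‖c n * ((n : ℝ) * u ^ (n - 1))‖ = (n : ℝ) * |c n| * |u| ^ (n - 1) := by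
          rw [Real.norm_eq_abs, abs_mul, abs_mul, abs_pow, abs_of_nonneg (by positivity : (0:ℝ) ≤ (n:ℝ))]
          ring
      _ ≤ (n : ℝ) * |c n| * R ^ (n - 1) := by gcongr; linarith
  have : (∑' n, c n * ((n : ℝ) * u ^ (n - 1)))
      = ∑' k : ℕ, ((k : ℝ) + 1) * c (k + 1) * u ^ k := by
    rw [Summable.tsum_eq_zero_add hsum']
    simp only [Nat.cast_zero, zero_mul, mul_zero, zero_add]
    apply tsum_congr
    intro k
    push_cast
    ring
  rwa [this] at key

noncomputable def bS (ν u : ℝ) : ℝ := ∑' k : ℕ, bc ν k * u ^ k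
noncomputable def bS1 (ν u : ℝ) : ℝ := ∑' k : ℕ, ((k : ℝ) + 1) * bc ν (k + 1) * u ^ k
noncomputable def bS2 (ν u : ℝ) : ℝ :=
  ∑' k : ℕ, ((k : ℝ) + 1) * ((((k + 1 : ℕ)) : ℝ) + 1) * bc ν (k + 1 + 1) * u ^ k

lemma bc_ratio {ν : ℝ} (hν : ∀ n : ℤ, ν ≠ (n : ℝ)) :
    Tendsto (fun k => |bc ν (k + 1)| / |bc ν k|) atTop (𝓝 0) := by
  have h1 : Tendsto (fun k : ℕ => (((k : ℝ) + 1) * |(k : ℝ) + ν + 1|)⁻¹) atTop (𝓝 0) := by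
    apply Tendsto.comp tendsto_inv_atTop_zero
    apply Filter.Tendsto.atTop_mul_atTop₀
    · exact tendsto_atTop_add_const_right _ 1 tendsto_natCast_atTop_atTop
    · apply (tendsto_abs_atTop_atTop).comp
      have : Tendsto (fun k : ℕ => (k : ℝ)) atTop atTop := tendsto_natCast_atTop_atTop
      exact (tendsto_atTop_add_const_right _ (ν + 1) this).congr (fun k => by ring)
  apply h1.congr
  intro k
  have hb := bc_ne_zero hν (k + 1)
  have hz := natadd_ne_zero hν k
  rw [← bc_rec hν k, abs_mul, abs_mul,
    abs_of_pos (show (0:ℝ) < (k : ℝ) + 1 by positivity)]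
  rw [eq_div_iff (by positivity)]
  field_simp

lemma bS_hasDerivAt {ν : ℝ} (hν : ∀ n : ℤ, ν ≠ (n : ℝ)) (u : ℝ) :
    HasDerivAt (bS ν) (bS1 ν u) u :=
  hasDerivAt_series (bc ν) (bc_ne_zero hν) (bc_ratio hν) u

lemma bS1_hasDerivAt {ν : ℝ} (hν : ∀ n : ℤ, ν ≠ (n : ℝ)) (u : ℝ) :
    HasDerivAt (bS1 ν) (bS2 ν u) u := by
  have := hasDerivAt_series (fun k => ((k : ℝ) + 1) * bc ν (k + 1))
    (shift_ne_zero _ (bc_ne_zero hν)) (shift_ratio _ (bc_ne_zero hν) (bc_ratio hν)) u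
  refine this.congr_deriv ?_
  rw [bS2]
  apply tsum_congr
  intro k
  push_cast
  ring

lemma bS_summable {ν : ℝ} (hν : ∀ n : ℤ, ν ≠ (n : ℝ)) (u : ℝ) :
    Summable (fun k : ℕ => bc ν k * u ^ k) :=
  summable_ratio _ (bc_ne_zero hν) (bc_ratio hν) u

lemma bS1_summable {ν : ℝ} (hν : ∀ n : ℤ, ν ≠ (n : ℝ)) (u : ℝ) :
    Summable (fun k : ℕ => ((k : ℝ) + 1) * bc ν (k + 1) * u ^ k) :=
  summable_ratio _ (shift_ne_zero _ (bc_ne_zero hν)) (shift_ratio _ (bc_ne_zero hν) (bc_ratio hν)) u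

lemma bS2_summable {ν : ℝ} (hν : ∀ n : ℤ, ν ≠ (n : ℝ)) (u : ℝ) :
    Summable (fun k : ℕ => ((k : ℝ) + 1) * ((((k + 1 : ℕ)) : ℝ) + 1) * bc ν (k + 1 + 1) * u ^ k) := by
  have h := summable_ratio (fun k => ((k : ℝ) + 1) * ((fun j : ℕ => ((j : ℝ) + 1) * bc ν (j + 1)) (k + 1)))
    (shift_ne_zero _ (shift_ne_zero _ (bc_ne_zero hν)))
    (shift_ratio _ (shift_ne_zero _ (bc_ne_zero hν)) (shift_ratio _ (bc_ne_zero hν) (bc_ratio hν))) u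
  apply h.congr
  intro k
  push_cast
  ring

lemma bS_ode {ν : ℝ} (hν : ∀ n : ℤ, ν ≠ (n : ℝ)) (u : ℝ) :
    u * bS2 ν u + (ν + 1) * bS1 ν u = bS ν u := by
  set e : ℕ → ℝ := fun k => (k : ℝ) * ((k : ℝ) + 1) * bc ν (k + 1) * u ^ k with he
  set d : ℕ → ℝ := fun k => ((k : ℝ) + 1) * ((((k + 1 : ℕ)) : ℝ) + 1) * bc ν (k + 1 + 1) * u ^ k with hd
  have h_succ : ∀ k : ℕ, e (k + 1) = u * d k := by
    intro k
    simp only [he, hd]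
    push_cast
    ring
  have hdsum : Summable d := bS2_summable hν u
  have hesum : Summable e := by
    apply (summable_nat_add_iff 1).1
    exact (hdsum.mul_left u).congr (fun k => (h_succ k).symm)
  have hue : u * bS2 ν u = ∑' k, e k := by
    calc u * bS2 ν u = ∑' k, u * d k := by rw [bS2, tsum_mul_left]
      _ = ∑' k, e (k + 1) := tsum_congr (fun k => (h_succ k).symm)
      _ = ∑' k, e k := by
          rw [Summable.tsum_eq_zero_add hesum]
          simp [he]
  have hs1 : (ν + 1) * bS1 ν u = ∑' k : ℕ, (ν + 1) * (((k : ℝ) + 1) * bc ν (k + 1) * u ^ k) := by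
    rw [bS1, tsum_mul_left]
  have hs1sum : Summable (fun k : ℕ => (ν + 1) * (((k : ℝ) + 1) * bc ν (k + 1) * u ^ k)) :=
    (bS1_summable hν u).mul_left _
  rw [hue, hs1, ← Summable.tsum_add hesum hs1sum, bS]
  apply tsum_congr
  intro k
  simp only [he]
  linear_combination u ^ k * bc_rec hν k

lemma besselI_eq {ν z : ℝ} (hz : 0 < z) :
    besselI ν z = (z / 2) ^ ν * bS ν ((z / 2) ^ 2) := by
  rw [besselI, bS, ← tsum_mul_left]
  apply tsum_congr
  intro k
  have h2 : (0:ℝ) < z / 2 := by linarith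
  have h3 : (z / 2) ^ (2 * (k : ℝ) + ν) = (z / 2) ^ ν * ((z / 2) ^ 2) ^ k := by
    rw [Real.rpow_add h2, show (2 * (k : ℝ)) = ((2 * k : ℕ) : ℝ) by push_cast; ring,
      Real.rpow_natCast, pow_mul, mul_comm]
  rw [h3, bc, div_eq_mul_inv]
  ring

lemma lin_hasDerivAt (b : ℝ) (x : ℝ) : HasDerivAt (fun ξ : ℝ => b * ξ) b x := by
  simpa using (hasDerivAt_id x).const_mul b

lemma expLin_hasDerivAt (κ γ : ℝ) (x : ℝ) :
    HasDerivAt (fun ξ : ℝ => Real.exp (κ - γ * ξ)) (-γ * Real.exp (κ - γ * x)) x := by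
  have h1 : HasDerivAt (fun ξ : ℝ => κ - γ * ξ) (-γ) x := by
    simpa using ((lin_hasDerivAt γ x).const_sub κ)
  simpa [mul_comm] using h1.exp

lemma rpowLin_hasDerivAt (b m : ℝ) {x : ℝ} (hb : 0 < b) (hx : 0 < x) :
    HasDerivAt (fun ξ : ℝ => (b * ξ) ^ m) (b * (m * (b * x) ^ (m - 1))) x := by
  have hbx : b * x ≠ 0 := by positivity
  have h1 := Real.hasDerivAt_rpow_const (x := b * x) (p := m) (Or.inl hbx)
  have := h1.comp x (lin_hasDerivAt b x)
  refine this.congr_deriv ?_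
  ring

lemma bSLin_hasDerivAt {ρ : ℝ} (hρ : ∀ n : ℤ, ρ ≠ (n : ℝ)) (b : ℝ) (x : ℝ) :
    HasDerivAt (fun ξ : ℝ => bS ρ (b * ξ)) (b * bS1 ρ (b * x)) x := by
  have := (bS_hasDerivAt hρ (b * x)).comp x (lin_hasDerivAt b x)
  refine this.congr_deriv ?_
  ring

lemma bS1Lin_hasDerivAt {ρ : ℝ} (hρ : ∀ n : ℤ, ρ ≠ (n : ℝ)) (b : ℝ) (x : ℝ) :
    HasDerivAt (fun ξ : ℝ => bS1 ρ (b * ξ)) (b * bS2 ρ (b * x)) x := by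
  have := (bS1_hasDerivAt hρ (b * x)).comp x (lin_hasDerivAt b x)
  refine this.congr_deriv ?_
  ring

lemma G_hasDerivAt {ρ : ℝ} (hρ : ∀ n : ℤ, ρ ≠ (n : ℝ)) (κ γ m : ℝ) {b x : ℝ}
    (hb : 0 < b) (hx : 0 < x) :
    HasDerivAt (fun ξ : ℝ => Real.exp (κ - γ * ξ) * ((b * ξ) ^ m * bS ρ (b * ξ)))
      (Real.exp (κ - γ * x) * (-γ * ((b * x) ^ m * bS ρ (b * x))
        + b * (m * (b * x) ^ (m - 1) * bS ρ (b * x) + (b * x) ^ m * bS1 ρ (b * x)))) x := by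
  have h1 := (rpowLin_hasDerivAt b m hb hx).mul (bSLin_hasDerivAt hρ b x)
  have h2 := (expLin_hasDerivAt κ γ x).mul h1
  refine h2.congr_deriv ?_
  simp only [Pi.mul_apply]
  ring

lemma G1_hasDerivAt {ρ : ℝ} (hρ : ∀ n : ℤ, ρ ≠ (n : ℝ)) (κ γ m : ℝ) {b x : ℝ}
    (hb : 0 < b) (hx : 0 < x) :
    HasDerivAt (fun ξ : ℝ => Real.exp (κ - γ * ξ) * (-γ * ((b * ξ) ^ m * bS ρ (b * ξ))
        + b * (m * (b * ξ) ^ (m - 1) * bS ρ (b * ξ) + (b * ξ) ^ m * bS1 ρ (b * ξ))))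
      (Real.exp (κ - γ * x) * (γ ^ 2 * ((b * x) ^ m * bS ρ (b * x))
        - 2 * γ * b * (m * (b * x) ^ (m - 1) * bS ρ (b * x) + (b * x) ^ m * bS1 ρ (b * x))
        + b ^ 2 * (m * (m - 1) * (b * x) ^ (m - 1 - 1) * bS ρ (b * x)
            + 2 * m * (b * x) ^ (m - 1) * bS1 ρ (b * x) + (b * x) ^ m * bS2 ρ (b * x)))) x := by
  have hin : HasDerivAt (fun ξ : ℝ => -γ * ((b * ξ) ^ m * bS ρ (b * ξ))
      + b * (m * (b * ξ) ^ (m - 1) * bS ρ (b * ξ) + (b * ξ) ^ m * bS1 ρ (b * ξ)))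
      (-γ * ((b * (m * (b * x) ^ (m - 1))) * bS ρ (b * x) + (b * x) ^ m * (b * bS1 ρ (b * x)))
        + b * ((m * (b * ((m - 1) * (b * x) ^ (m - 1 - 1)))) * bS ρ (b * x)
            + m * (b * x) ^ (m - 1) * (b * bS1 ρ (b * x))
            + ((b * (m * (b * x) ^ (m - 1))) * bS1 ρ (b * x) + (b * x) ^ m * (b * bS2 ρ (b * x))))) x := by
    have hA1 := ((rpowLin_hasDerivAt b m hb hx).mul (bSLin_hasDerivAt hρ b x)).const_mul (-γ)
    have hpow1 : HasDerivAt (fun ξ : ℝ => m * (b * ξ) ^ (m - 1)) (m * (b * ((m - 1) * (b * x) ^ (m - 1 - 1)))) x :=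
      (rpowLin_hasDerivAt b (m - 1) hb hx).const_mul m
    have hB1 := (hpow1.mul (bSLin_hasDerivAt hρ b x)).add
      ((rpowLin_hasDerivAt b m hb hx).mul (bS1Lin_hasDerivAt hρ b x))
    exact hA1.add ((hB1.const_mul b))
  have h2 := (expLin_hasDerivAt κ γ x).mul hin
  refine h2.congr_deriv ?_
  ring

lemma Ht_hasDerivAt {ρ : ℝ} (hρ : ∀ n : ℤ, ρ ≠ (n : ℝ)) (m σ A B y x : ℝ)
    (hσ : 0 < σ) (hA : 0 < A) (hy : 0 < y) (hx : 0 < x) {t : ℝ} (ht : 0 < t) :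
    HasDerivAt (fun τ : ℝ => Real.exp (-B * τ / (2 * σ)
        - Real.sqrt A * Real.cosh (Real.sqrt A * τ / 2) * (x + y)
          / (2 * σ * Real.sinh (Real.sqrt A * τ / 2)))
      * ((A * y / (4 * σ ^ 2 * Real.sinh (Real.sqrt A * τ / 2) ^ 2) * x) ^ m
        * bS ρ (A * y / (4 * σ ^ 2 * Real.sinh (Real.sqrt A * τ / 2) ^ 2) * x)))
      (Real.exp (-B * t / (2 * σ)
        - Real.sqrt A * Real.cosh (Real.sqrt A * t / 2) * (x + y)
          / (2 * σ * Real.sinh (Real.sqrt A * t / 2)))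
      * ((-B / (2 * σ) + A / (4 * σ * Real.sinh (Real.sqrt A * t / 2) ^ 2) * (x + y))
          * ((A * y / (4 * σ ^ 2 * Real.sinh (Real.sqrt A * t / 2) ^ 2) * x) ^ m
            * bS ρ (A * y / (4 * σ ^ 2 * Real.sinh (Real.sqrt A * t / 2) ^ 2) * x))
        + (-(A * y * Real.sqrt A * Real.cosh (Real.sqrt A * t / 2)
              / (4 * σ ^ 2 * Real.sinh (Real.sqrt A * t / 2) ^ 3)) * x)
          * (m * (A * y / (4 * σ ^ 2 * Real.sinh (Real.sqrt A * t / 2) ^ 2) * x) ^ (m - 1)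
              * bS ρ (A * y / (4 * σ ^ 2 * Real.sinh (Real.sqrt A * t / 2) ^ 2) * x)
            + (A * y / (4 * σ ^ 2 * Real.sinh (Real.sqrt A * t / 2) ^ 2) * x) ^ m
              * bS1 ρ (A * y / (4 * σ ^ 2 * Real.sinh (Real.sqrt A * t / 2) ^ 2) * x)))) t := by
  set a := Real.sqrt A with ha
  have haA : a ^ 2 = A := Real.sq_sqrt hA.le
  have ha0 : 0 < a := Real.sqrt_pos.2 hA
  set s := Real.sinh (a * t / 2) with hs
  set c := Real.cosh (a * t / 2) with hc
  have hs0 : 0 < s := Real.sinh_pos_iff.2 (by positivity)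
  have hcs : c ^ 2 = s ^ 2 + 1 := Real.cosh_sq _
  have h_at : HasDerivAt (fun τ : ℝ => a * τ / 2) (a / 2) t := by
    simpa using ((hasDerivAt_id t).const_mul a).div_const 2
  have h_s : HasDerivAt (fun τ : ℝ => Real.sinh (a * τ / 2)) (c * (a / 2)) t :=
    (Real.hasDerivAt_sinh _).comp t h_at
  have h_c : HasDerivAt (fun τ : ℝ => Real.cosh (a * τ / 2)) (s * (a / 2)) t :=
    (Real.hasDerivAt_cosh _).comp t h_at
  have hden0 : 4 * σ ^ 2 * s ^ 2 ≠ 0 := by positivity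
  have h_b : HasDerivAt (fun τ : ℝ => A * y / (4 * σ ^ 2 * Real.sinh (a * τ / 2) ^ 2))
      (-(A * y * a * c / (4 * σ ^ 2 * s ^ 3))) t := by
    have hden : HasDerivAt (fun τ : ℝ => 4 * σ ^ 2 * Real.sinh (a * τ / 2) ^ 2)
        (4 * σ ^ 2 * (2 * s ^ 1 * (c * (a / 2)))) t := by
      exact ((h_s.pow 2).const_mul (4 * σ ^ 2))
    have := (hasDerivAt_const t (A * y)).div hden hden0
    refine this.congr_deriv ?_
    field_simp
    ring
  have h_arg : HasDerivAt (fun τ : ℝ => -B * τ / (2 * σ)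
      - a * Real.cosh (a * τ / 2) * (x + y) / (2 * σ * Real.sinh (a * τ / 2)))
      (-B / (2 * σ) + A / (4 * σ * s ^ 2) * (x + y)) t := by
    have h1 : HasDerivAt (fun τ : ℝ => -B * τ / (2 * σ)) (-B / (2 * σ)) t := by
      simpa using ((hasDerivAt_id t).const_mul (-B)).div_const (2 * σ)
    have hnum : HasDerivAt (fun τ : ℝ => a * Real.cosh (a * τ / 2) * (x + y))
        (s * (a / 2) * a * (x + y)) t := by
      have := (h_c.const_mul a).mul_const (x + y)
      refine this.congr_deriv ?_
      ring
    have hden : HasDerivAt (fun τ : ℝ => 2 * σ * Real.sinh (a * τ / 2)) (2 * σ * (c * (a / 2))) t :=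
      h_s.const_mul (2 * σ)
    have hden0' : 2 * σ * s ≠ 0 := by positivity
    have h2 := hnum.div hden hden0'
    have := h1.sub h2
    refine this.congr_deriv ?_
    simp only [← hs, ← hc]
    rw [← haA]
    field_simp
    linear_combination (4 * a ^ 2 * (x + y)) * hcs
  have h_u : HasDerivAt (fun τ : ℝ => A * y / (4 * σ ^ 2 * Real.sinh (a * τ / 2) ^ 2) * x)
      (-(A * y * a * c / (4 * σ ^ 2 * s ^ 3)) * x) t := h_b.mul_const x
  have hu0 : A * y / (4 * σ ^ 2 * s ^ 2) * x ≠ 0 := by positivity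
  have h_pow : HasDerivAt
      (fun τ : ℝ => (A * y / (4 * σ ^ 2 * Real.sinh (a * τ / 2) ^ 2) * x) ^ m)
      (m * (A * y / (4 * σ ^ 2 * s ^ 2) * x) ^ (m - 1) * (-(A * y * a * c / (4 * σ ^ 2 * s ^ 3)) * x)) t :=
    by have := (Real.hasDerivAt_rpow_const (p := m) (Or.inl hu0)).comp t h_u; exact this
  have h_S : HasDerivAt
      (fun τ : ℝ => bS ρ (A * y / (4 * σ ^ 2 * Real.sinh (a * τ / 2) ^ 2) * x))
      (bS1 ρ (A * y / (4 * σ ^ 2 * s ^ 2) * x) * (-(A * y * a * c / (4 * σ ^ 2 * s ^ 3)) * x)) t :=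
    (bS_hasDerivAt hρ _).comp t h_u
  have hfinal := h_arg.exp.mul (h_pow.mul h_S)
  refine hfinal.congr_deriv ?_
  simp only [Pi.mul_apply, ← hs, ← hc]
  ring

/-- `γ` coefficient -/
noncomputable def gam (σ A t : ℝ) : ℝ :=
  Real.sqrt A * Real.cosh (Real.sqrt A * t / 2) / (2 * σ * Real.sinh (Real.sqrt A * t / 2))

/-- `b` coefficient -/
noncomputable def bb (σ A y t : ℝ) : ℝ :=
  A * y / (4 * σ ^ 2 * Real.sinh (Real.sqrt A * t / 2) ^ 2)

/-- normal form building block -/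
noncomputable def Nf (σ A B y ρ : ℝ) (τ ξ : ℝ) : ℝ :=
  Real.exp (-B * τ / (2 * σ)
      - Real.sqrt A * Real.cosh (Real.sqrt A * τ / 2) * (ξ + y)
        / (2 * σ * Real.sinh (Real.sqrt A * τ / 2)))
    * ((A * y / (4 * σ ^ 2 * Real.sinh (Real.sqrt A * τ / 2) ^ 2) * ξ) ^ ((1 + ρ) / 2)
      * bS ρ (A * y / (4 * σ ^ 2 * Real.sinh (Real.sqrt A * τ / 2) ^ 2) * ξ))

/-- first spatial derivative of `Nf` -/
noncomputable def N1 (σ A B y ρ : ℝ) (t ξ : ℝ) : ℝ :=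
  Real.exp (-B * t / (2 * σ)
      - Real.sqrt A * Real.cosh (Real.sqrt A * t / 2) * (ξ + y)
        / (2 * σ * Real.sinh (Real.sqrt A * t / 2)))
    * (-(gam σ A t) * ((bb σ A y t * ξ) ^ ((1 + ρ) / 2) * bS ρ (bb σ A y t * ξ))
      + bb σ A y t * ((1 + ρ) / 2 * (bb σ A y t * ξ) ^ ((1 + ρ) / 2 - 1) * bS ρ (bb σ A y t * ξ)
        + (bb σ A y t * ξ) ^ ((1 + ρ) / 2) * bS1 ρ (bb σ A y t * ξ)))

/-- second spatial derivative of `Nf` -/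
noncomputable def N2 (σ A B y ρ : ℝ) (t ξ : ℝ) : ℝ :=
  Real.exp (-B * t / (2 * σ)
      - Real.sqrt A * Real.cosh (Real.sqrt A * t / 2) * (ξ + y)
        / (2 * σ * Real.sinh (Real.sqrt A * t / 2)))
    * ((gam σ A t) ^ 2 * ((bb σ A y t * ξ) ^ ((1 + ρ) / 2) * bS ρ (bb σ A y t * ξ))
      - 2 * gam σ A t * bb σ A y t
          * ((1 + ρ) / 2 * (bb σ A y t * ξ) ^ ((1 + ρ) / 2 - 1) * bS ρ (bb σ A y t * ξ)
            + (bb σ A y t * ξ) ^ ((1 + ρ) / 2) * bS1 ρ (bb σ A y t * ξ))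
      + (bb σ A y t) ^ 2
          * ((1 + ρ) / 2 * ((1 + ρ) / 2 - 1) * (bb σ A y t * ξ) ^ ((1 + ρ) / 2 - 1 - 1)
              * bS ρ (bb σ A y t * ξ)
            + 2 * ((1 + ρ) / 2) * (bb σ A y t * ξ) ^ ((1 + ρ) / 2 - 1) * bS1 ρ (bb σ A y t * ξ)
            + (bb σ A y t * ξ) ^ ((1 + ρ) / 2) * bS2 ρ (bb σ A y t * ξ)))

/-- time derivative of `Nf` -/
noncomputable def Nt (σ A B y ρ : ℝ) (t x : ℝ) : ℝ :=
  Real.exp (-B * t / (2 * σ)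
      - Real.sqrt A * Real.cosh (Real.sqrt A * t / 2) * (x + y)
        / (2 * σ * Real.sinh (Real.sqrt A * t / 2)))
    * ((-B / (2 * σ) + A / (4 * σ * Real.sinh (Real.sqrt A * t / 2) ^ 2) * (x + y))
        * ((bb σ A y t * x) ^ ((1 + ρ) / 2) * bS ρ (bb σ A y t * x))
      + (-(A * y * Real.sqrt A * Real.cosh (Real.sqrt A * t / 2)
            / (4 * σ ^ 2 * Real.sinh (Real.sqrt A * t / 2) ^ 3)) * x)
        * ((1 + ρ) / 2 * (bb σ A y t * x) ^ ((1 + ρ) / 2 - 1) * bS ρ (bb σ A y t * x)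
          + (bb σ A y t * x) ^ ((1 + ρ) / 2) * bS1 ρ (bb σ A y t * x)))

lemma bb_pos {σ A y t : ℝ} (hσ : 0 < σ) (hA : 0 < A) (hy : 0 < y) (ht : 0 < t) :
    0 < bb σ A y t := by
  have ha0 : 0 < Real.sqrt A := Real.sqrt_pos.2 hA
  have hs0 : 0 < Real.sinh (Real.sqrt A * t / 2) := Real.sinh_pos_iff.2 (by positivity)
  rw [bb]; positivity

lemma Nf_t {σ A B y ρ : ℝ} (hρ : ∀ n : ℤ, ρ ≠ (n : ℝ)) (hσ : 0 < σ) (hA : 0 < A)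
    (hy : 0 < y) {t x : ℝ} (ht : 0 < t) (hx : 0 < x) :
    HasDerivAt (fun τ => Nf σ A B y ρ τ x) (Nt σ A B y ρ t x) t := by
  have := Ht_hasDerivAt hρ ((1 + ρ) / 2) σ A B y x hσ hA hy hx ht
  simp only [Nf, Nt, bb]
  exact this

lemma Nf_x {σ A B y ρ : ℝ} (hρ : ∀ n : ℤ, ρ ≠ (n : ℝ)) (hσ : 0 < σ) (hA : 0 < A)
    (hy : 0 < y) {t x : ℝ} (ht : 0 < t) (hx : 0 < x) :
    HasDerivAt (fun ξ => Nf σ A B y ρ t ξ) (N1 σ A B y ρ t x) x := by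
  have key := G_hasDerivAt hρ (-B * t / (2 * σ) - gam σ A t * y) (gam σ A t) ((1 + ρ) / 2)
    (bb_pos hσ hA hy ht) hx
  have hfun : (fun ξ => Nf σ A B y ρ t ξ)
      = (fun ξ : ℝ => Real.exp (-B * t / (2 * σ) - gam σ A t * y - gam σ A t * ξ)
        * ((bb σ A y t * ξ) ^ ((1 + ρ) / 2) * bS ρ (bb σ A y t * ξ))) := by
    funext ξ
    rw [Nf, bb, gam]
    rw [show -B * t / (2 * σ)
        - Real.sqrt A * Real.cosh (Real.sqrt A * t / 2) * (ξ + y)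
          / (2 * σ * Real.sinh (Real.sqrt A * t / 2))
      = -B * t / (2 * σ)
        - Real.sqrt A * Real.cosh (Real.sqrt A * t / 2) / (2 * σ * Real.sinh (Real.sqrt A * t / 2)) * y
        - Real.sqrt A * Real.cosh (Real.sqrt A * t / 2) / (2 * σ * Real.sinh (Real.sqrt A * t / 2)) * ξ
      from by ring]
  rw [hfun, N1]
  rw [show -B * t / (2 * σ)
      - Real.sqrt A * Real.cosh (Real.sqrt A * t / 2) * (x + y)
        / (2 * σ * Real.sinh (Real.sqrt A * t / 2))
    = -B * t / (2 * σ) - gam σ A t * y - gam σ A t * x from by rw [gam]; ring]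
  exact key

lemma N1_x {σ A B y ρ : ℝ} (hρ : ∀ n : ℤ, ρ ≠ (n : ℝ)) (hσ : 0 < σ) (hA : 0 < A)
    (hy : 0 < y) {t x : ℝ} (ht : 0 < t) (hx : 0 < x) :
    HasDerivAt (fun ξ => N1 σ A B y ρ t ξ) (N2 σ A B y ρ t x) x := by
  have key := G1_hasDerivAt hρ (-B * t / (2 * σ) - gam σ A t * y) (gam σ A t) ((1 + ρ) / 2)
    (bb_pos hσ hA hy ht) hx
  have hfun : (fun ξ => N1 σ A B y ρ t ξ)
      = (fun ξ : ℝ => Real.exp (-B * t / (2 * σ) - gam σ A t * y - gam σ A t * ξ)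
        * (-(gam σ A t) * ((bb σ A y t * ξ) ^ ((1 + ρ) / 2) * bS ρ (bb σ A y t * ξ))
          + bb σ A y t * ((1 + ρ) / 2 * (bb σ A y t * ξ) ^ ((1 + ρ) / 2 - 1) * bS ρ (bb σ A y t * ξ)
            + (bb σ A y t * ξ) ^ ((1 + ρ) / 2) * bS1 ρ (bb σ A y t * ξ)))) := by
    funext ξ
    rw [N1]
    rw [show -B * t / (2 * σ)
        - Real.sqrt A * Real.cosh (Real.sqrt A * t / 2) * (ξ + y)
          / (2 * σ * Real.sinh (Real.sqrt A * t / 2))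
      = -B * t / (2 * σ) - gam σ A t * y - gam σ A t * ξ from by rw [gam]; ring]
  rw [hfun, N2]
  rw [show -B * t / (2 * σ)
      - Real.sqrt A * Real.cosh (Real.sqrt A * t / 2) * (x + y)
        / (2 * σ * Real.sinh (Real.sqrt A * t / 2))
    = -B * t / (2 * σ) - gam σ A t * y - gam σ A t * x from by rw [gam]; ring]
  exact key

lemma N_pde {σ A B y ρ : ℝ} (hσ : 0 < σ) (hA : 0 < A) (hy : 0 < y)
    (hρ : ∀ n : ℤ, ρ ≠ (n : ℝ)) {t x : ℝ} (ht : 0 < t) (hx : 0 < x) :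
    Nt σ A B y ρ t x = σ * x * N2 σ A B y ρ t x
      - (A * x / (4 * σ) + B / (2 * σ) + σ * (ρ ^ 2 - 1) / (4 * x)) * Nf σ A B y ρ t x := by
  simp only [Nt, N2, Nf, bb, gam]
  set a := Real.sqrt A with ha
  have haA : a ^ 2 = A := Real.sq_sqrt hA.le
  have ha0 : 0 < a := Real.sqrt_pos.2 hA
  set s := Real.sinh (a * t / 2) with hs
  set c := Real.cosh (a * t / 2) with hc
  have hs0 : 0 < s := by rw [hs]; exact Real.sinh_pos_iff.2 (by positivity)
  have hcs : c ^ 2 = s ^ 2 + 1 := Real.cosh_sq _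
  rw [← haA]
  set β := a ^ 2 * y / (4 * σ ^ 2 * s ^ 2) with hβ
  have hβ0 : 0 < β := by rw [hβ]; positivity
  set g := a * c / (2 * σ * s) with hg
  have hβx : 0 < β * x := by positivity
  have hw1 : (β * x) ^ ((1 + ρ) / 2 - 1) = (β * x) ^ ((1 + ρ) / 2) / (β * x) := by
    rw [Real.rpow_sub hβx, Real.rpow_one]
  have hw2 : (β * x) ^ ((1 + ρ) / 2 - 1 - 1) = (β * x) ^ ((1 + ρ) / 2) / (β * x) / (β * x) := by
    rw [Real.rpow_sub hβx, Real.rpow_sub hβx, Real.rpow_one]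
  rw [hw1, hw2]
  set w := (β * x) ^ ((1 + ρ) / 2) with hwdef
  have hODE := bS_ode hρ (β * x)
  set S := bS ρ (β * x) with hS
  set S1 := bS1 ρ (β * x) with hS1
  set S2 := bS2 ρ (β * x) with hS2
  set P := Real.exp (-B * t / (2 * σ) - a * c * (x + y) / (2 * σ * s)) with hP
  have hx0 : x ≠ 0 := ne_of_gt hx
  have hσ0 : σ ≠ 0 := ne_of_gt hσ
  have hs0' : s ≠ 0 := ne_of_gt hs0
  have hβ0' : β ≠ 0 := ne_of_gt hβ0
  have E1 : σ * x * (β ^ 2 * ((1 + ρ) / 2 * ((1 + ρ) / 2 - 1) * (w / (β * x) / (β * x)) * S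
        + 2 * ((1 + ρ) / 2) * (w / (β * x)) * S1 + w * S2))
      = σ * (ρ ^ 2 - 1) / (4 * x) * (w * S) + σ * β * (w * S) := by
    have hS2' : S2 = (S - (ρ + 1) * S1) / (β * x) := by
      field_simp
      linarith [hODE]
    rw [hS2']
    field_simp
    ring
  have E2 : σ * x * g ^ 2 = a ^ 2 * x / (4 * σ) + a ^ 2 * x / (4 * σ * s ^ 2) := by
    rw [hg]
    field_simp
    linear_combination 4 * hcs
  have E3 : -(a ^ 2 * y * a * c / (4 * σ ^ 2 * s ^ 3)) * x = -(2 * σ * g * β * x) := by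
    rw [hg, hβ]
    field_simp
  have E4 : a ^ 2 / (4 * σ * s ^ 2) * (x + y) = a ^ 2 * x / (4 * σ * s ^ 2) + σ * β := by
    rw [hβ]
    field_simp
  linear_combination (P * (w * S)) * E4
    + (P * ((1 + ρ) / 2 * (w / (β * x)) * S + w * S1)) * E3
    - (P * (w * S)) * E2 - P * E1

noncomputable def Efun (σ : ℝ) (F : ℝ → ℝ) (y ξ : ℝ) : ℝ := Real.exp (-(F ξ - F y) / (2 * σ))

lemma formula_eq (σ A B ν y C₁ C₂ : ℝ) (F : ℝ → ℝ) (hσ : 0 < σ) (hA : 0 < A) (hy : 0 < y)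
    {τ ξ : ℝ} (hτ : 0 < τ) (hξ : 0 < ξ) :
    (Real.sqrt (A * ξ * y) / (2 * σ * Real.sinh (Real.sqrt A * τ / 2)))
      * Real.exp (-(F ξ - F y) / (2 * σ))
      * Real.exp (-B * τ / (2 * σ)
          - Real.sqrt A * (ξ + y) / (2 * σ * Real.tanh (Real.sqrt A * τ / 2)))
      * (C₁ * besselI ν (Real.sqrt (A * ξ * y) / (σ * Real.sinh (Real.sqrt A * τ / 2)))
        + C₂ * besselI (-ν) (Real.sqrt (A * ξ * y) / (σ * Real.sinh (Real.sqrt A * τ / 2))))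
    = Efun σ F y ξ * (C₁ * Nf σ A B y ν τ ξ + C₂ * Nf σ A B y (-ν) τ ξ) := by
  set a := Real.sqrt A with ha
  have ha0 : 0 < a := Real.sqrt_pos.2 hA
  set s := Real.sinh (a * τ / 2) with hs
  set c := Real.cosh (a * τ / 2) with hc
  have hs0 : 0 < s := by rw [hs]; exact Real.sinh_pos_iff.2 (by positivity)
  have hc0 : 0 < c := Real.cosh_pos _
  set u := A * y / (4 * σ ^ 2 * s ^ 2) * ξ with hu
  have hu0 : 0 < u := by rw [hu]; positivity
  have hAξy : (0:ℝ) < A * ξ * y := by positivity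
  have hzpos : 0 < Real.sqrt (A * ξ * y) / (σ * s) := by positivity
  have hz2 : Real.sqrt (A * ξ * y) / (2 * σ * s) = Real.sqrt u := by
    rw [hu, show A * y / (4 * σ ^ 2 * s ^ 2) * ξ = (A * ξ * y) / ((2 * σ * s) ^ 2) by ring,
      Real.sqrt_div hAξy.le, Real.sqrt_sq (by positivity : (0:ℝ) ≤ 2 * σ * s)]
  have hz2' : Real.sqrt (A * ξ * y) / (σ * s) / 2 = Real.sqrt u := by
    rw [← hz2]; ring
  have hsq : Real.sqrt u ^ (2:ℕ) = u := Real.sq_sqrt hu0.le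
  have hsu0 : 0 < Real.sqrt u := Real.sqrt_pos.2 hu0
  have hpow : ∀ ρ : ℝ, Real.sqrt u * Real.sqrt u ^ ρ = u ^ ((1 + ρ) / 2) := by
    intro ρ
    rw [show Real.sqrt u * Real.sqrt u ^ ρ
        = Real.sqrt u ^ (1:ℝ) * Real.sqrt u ^ ρ by rw [Real.rpow_one],
      ← Real.rpow_add hsu0, Real.sqrt_eq_rpow, ← Real.rpow_mul hu0.le,
      show (1 / 2 : ℝ) * (1 + ρ) = (1 + ρ) / 2 by ring]
  have hexp : Real.exp (-B * τ / (2 * σ) - a * (ξ + y) / (2 * σ * Real.tanh (a * τ / 2)))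
      = Real.exp (-B * τ / (2 * σ) - a * c * (ξ + y) / (2 * σ * s)) := by
    congr 1
    rw [Real.tanh_eq_sinh_div_cosh, ← hs, ← hc]
    field_simp
  rw [besselI_eq hzpos, besselI_eq hzpos, hexp, hz2', Nf, Nf, Efun, hz2, hsq, ← hu]
  rw [← ha, ← hs]
  rw [← hpow ν, ← hpow (-ν)]
  ring

/-- The fundamental solution formula of Theorem 5.4 for the PDE
`u_t = σ x u_xx + f(x) u_x - μ x u` when the drift `f` solves the Riccati equation
`σ x f' - σ f + f²/2 + 2σμx² = (1/2)Ax² + Bx + C` with `A > 0`. -/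
theorem stmt_14 (σ μ A B C ν : ℝ) (hσ : 0 < σ) (hμ : 0 ≤ μ) (hA : 0 < A)
    (hC : 0 < σ ^ 2 + 2 * C)
    (hν : ν = Real.sqrt (σ ^ 2 + 2 * C) / σ) (hνint : ∀ n : ℤ, ν ≠ (n : ℝ))
    (f F : ℝ → ℝ)
    (hf : ∀ x > (0 : ℝ), DifferentiableAt ℝ f x)
    (hRic : ∀ x > (0 : ℝ),
      σ * x * deriv f x - σ * f x + (1 / 2) * (f x) ^ 2 + 2 * σ * μ * x ^ 2
        = (1 / 2) * A * x ^ 2 + B * x + C)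
    (hF : ∀ x > (0 : ℝ), HasDerivAt F (f x / x) x)
    (y : ℝ) (hy : 0 < y) (C₁ C₂ : ℝ)
    (p : ℝ → ℝ → ℝ)
    (hp : ∀ t x, p t x =
      (Real.sqrt (A * x * y) / (2 * σ * Real.sinh (Real.sqrt A * t / 2)))
        * Real.exp (-(F x - F y) / (2 * σ))
        * Real.exp (-B * t / (2 * σ)
            - Real.sqrt A * (x + y) / (2 * σ * Real.tanh (Real.sqrt A * t / 2)))
        * (C₁ * besselI ν (Real.sqrt (A * x * y) / (σ * Real.sinh (Real.sqrt A * t / 2)))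
          + C₂ * besselI (-ν)
              (Real.sqrt (A * x * y) / (σ * Real.sinh (Real.sqrt A * t / 2))))) :
    ∀ t > (0 : ℝ), ∀ x > (0 : ℝ),
      deriv (fun τ => p τ x) t
        = σ * x * deriv (deriv (fun ξ => p t ξ)) x
          + f x * deriv (fun ξ => p t ξ) x - μ * x * p t x := by
  intro t ht x hx
  have hν' : ∀ n : ℤ, -ν ≠ (n : ℝ) := by
    intro n h
    apply hνint (-n)
    push_cast
    linarith
  have hpeq : ∀ τ ξ : ℝ, 0 < τ → 0 < ξ → p τ ξ
      = Efun σ F y ξ * (C₁ * Nf σ A B y ν τ ξ + C₂ * Nf σ A B y (-ν) τ ξ) := by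
    intro τ ξ hτ hξ
    rw [hp]
    exact formula_eq σ A B ν y C₁ C₂ F hσ hA hy hτ hξ
  -- time derivative
  have hdt : HasDerivAt (fun τ => p τ x)
      (Efun σ F y x * (C₁ * Nt σ A B y ν t x + C₂ * Nt σ A B y (-ν) t x)) t := by
    have h1 := (((Nf_t (B := B) hνint hσ hA hy ht hx).const_mul C₁).add
      ((Nf_t (B := B) hν' hσ hA hy ht hx).const_mul C₂)).const_mul (Efun σ F y x)
    apply h1.congr_of_eventuallyEq
    filter_upwards [eventually_gt_nhds ht] with τ hτ
    exact hpeq τ x hτ hx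
  -- first spatial derivative (as a function)
  set D1 : ℝ → ℝ := fun ξ => Efun σ F y ξ
      * (C₁ * N1 σ A B y ν t ξ + C₂ * N1 σ A B y (-ν) t ξ)
    - f ξ / (2 * σ * ξ)
      * (Efun σ F y ξ * (C₁ * Nf σ A B y ν t ξ + C₂ * Nf σ A B y (-ν) t ξ)) with hD1
  have hE : ∀ ξ : ℝ, 0 < ξ → HasDerivAt (fun ζ => Efun σ F y ζ)
      (-(f ξ / ξ) / (2 * σ) * Efun σ F y ξ) ξ := by
    intro ξ hξ
    have h0 : HasDerivAt (fun ζ => -(F ζ - F y) / (2 * σ)) (-(f ξ / ξ) / (2 * σ)) ξ :=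
      (((hF ξ hξ).sub_const (F y)).neg).div_const (2 * σ)
    have := h0.exp
    simp only [Efun]
    convert this using 1
    ring
  have hVd : ∀ ξ : ℝ, 0 < ξ → HasDerivAt
      (fun ζ => C₁ * Nf σ A B y ν t ζ + C₂ * Nf σ A B y (-ν) t ζ)
      (C₁ * N1 σ A B y ν t ξ + C₂ * N1 σ A B y (-ν) t ξ) ξ := by
    intro ξ hξ
    exact ((Nf_x (B := B) hνint hσ hA hy ht hξ).const_mul C₁).add
      ((Nf_x (B := B) hν' hσ hA hy ht hξ).const_mul C₂)
  have hdx : ∀ ξ : ℝ, 0 < ξ → HasDerivAt (fun ζ => p t ζ) (D1 ξ) ξ := by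
    intro ξ hξ
    have h2 : HasDerivAt (fun ζ => Efun σ F y ζ
        * (C₁ * Nf σ A B y ν t ζ + C₂ * Nf σ A B y (-ν) t ζ)) (D1 ξ) ξ := by
      have := (hE ξ hξ).mul (hVd ξ hξ)
      refine this.congr_deriv ?_
      rw [hD1]
      have hξ0 : ξ ≠ 0 := ne_of_gt hξ
      field_simp
      ring
    apply h2.congr_of_eventuallyEq
    filter_upwards [eventually_gt_nhds hξ] with ζ hζ
    exact hpeq t ζ ht hζ
  -- second spatial derivative
  have hV1d : HasDerivAt (fun ζ => C₁ * N1 σ A B y ν t ζ + C₂ * N1 σ A B y (-ν) t ζ)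
      (C₁ * N2 σ A B y ν t x + C₂ * N2 σ A B y (-ν) t x) x :=
    ((N1_x (B := B) hνint hσ hA hy ht hx).const_mul C₁).add ((N1_x (B := B) hν' hσ hA hy ht hx).const_mul C₂)
  have hrd : HasDerivAt (fun ζ => f ζ / (2 * σ * ζ))
      ((deriv f x * (2 * σ * x) - f x * (2 * σ)) / (2 * σ * x) ^ 2) x := by
    exact (hf x hx).hasDerivAt.div (lin_hasDerivAt (2 * σ) x) (by positivity)
  have hdxx : HasDerivAt D1
      (Efun σ F y x * (C₁ * N2 σ A B y ν t x + C₂ * N2 σ A B y (-ν) t x)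
        - f x / (σ * x) * (Efun σ F y x * (C₁ * N1 σ A B y ν t x + C₂ * N1 σ A B y (-ν) t x))
        + (f x ^ 2 / (4 * σ ^ 2 * x ^ 2) - (deriv f x * x - f x) / (2 * σ * x ^ 2))
          * (Efun σ F y x * (C₁ * Nf σ A B y ν t x + C₂ * Nf σ A B y (-ν) t x))) x := by
    rw [hD1]
    have h3 := ((hE x hx).mul hV1d).sub (hrd.mul ((hE x hx).mul (hVd x hx)))
    refine h3.congr_deriv ?_
    have hx0 : x ≠ 0 := ne_of_gt hx
    simp only [Pi.mul_apply]
    field_simp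
    ring
  -- assemble
  have hEqdx : deriv (fun ξ => p t ξ) =ᶠ[𝓝 x] D1 := by
    filter_upwards [eventually_gt_nhds hx] with ξ hξ
    exact (hdx ξ hξ).deriv
  rw [hdt.deriv, hEqdx.deriv_eq, hdxx.deriv, (hdx x hx).deriv, hpeq t x ht hx]
  have hN1 := N_pde (B := B) (ρ := ν) hσ hA hy hνint ht hx
  have hN2 := N_pde (B := B) (ρ := -ν) hσ hA hy hν' ht hx
  have hνsq : σ ^ 2 * ν ^ 2 = σ ^ 2 + 2 * C := by
    rw [hν, div_pow, Real.sq_sqrt hC.le]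
    field_simp
  have hric := hRic x hx
  have stageB : Efun σ F y x * (C₁ * Nt σ A B y ν t x + C₂ * Nt σ A B y (-ν) t x)
      = Efun σ F y x * (σ * x * (C₁ * N2 σ A B y ν t x + C₂ * N2 σ A B y (-ν) t x)
        - (A * x / (4 * σ) + B / (2 * σ) + σ * (ν ^ 2 - 1) / (4 * x))
          * (C₁ * Nf σ A B y ν t x + C₂ * Nf σ A B y (-ν) t x)) := by
    linear_combination (Efun σ F y x * C₁) * hN1 + (Efun σ F y x * C₂) * hN2
  rw [stageB, hD1]
  have hx0 : x ≠ 0 := ne_of_gt hx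
  have hσ0 : σ ≠ 0 := ne_of_gt hσ
  set E := Efun σ F y x
  set W0 := C₁ * Nf σ A B y ν t x + C₂ * Nf σ A B y (-ν) t x
  set W1 := C₁ * N1 σ A B y ν t x + C₂ * N1 σ A B y (-ν) t x
  set W2 := C₁ * N2 σ A B y ν t x + C₂ * N2 σ A B y (-ν) t x
  field_simp
  linear_combination (4 * E * W0) * hric - (2 * E * W0) * hνsq
end

section
/- Let n ≥ 2 and b > 0. For all t > 0, x > 0, and λ ≥ 0, with p(t,x,y) = ( b/(2 sinh(bt)) ) (y/x)^{n/4 − 1/2} exp( −b(x+y)/(2 tanh(bt)) ) I_{(n−2)/2}( b√(xy)/sinh(bt) ), one has ∫_0^∞ e^{−λ y} p(t,x,y) dy = exp( −(xb/2) (1 + 2λ b^{−1} coth(bt)) / (coth(bt) + 2λ b^{−1}) ) / ( cosh(bt) + 2λ b^{−1} sinh(bt) )^{n/2}. -/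
open Real MeasureTheory

lemma bes_exp_tsum (z : ℝ) : ∑' k : ℕ, z ^ k / (Nat.factorial k : ℝ) = Real.exp z := by
  rw [Real.exp_eq_exp_ℝ, NormedSpace.exp_eq_tsum_div]

/-- Corollary 5.6: the Laplace transform of the fundamental solution (5.11)
of `u_t = 2x u_xx + n u_x - (b²/2) u`, i.e. the expectation
`E_x(exp(-λX_t - (b²/2)∫_0^t X_s ds))` for the squared Bessel process. -/
theorem stmt_15 (n b t x lam : ℝ) (hn : 2 ≤ n) (hb : 0 < b)
    (ht : 0 < t) (hx : 0 < x) (hlam : 0 ≤ lam)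
    (p : ℝ → ℝ)
    (hp : ∀ y, p y = (b / (2 * Real.sinh (b * t))) * (y / x) ^ (n / 4 - 1 / 2)
        * Real.exp (-b * (x + y) / (2 * Real.tanh (b * t)))
        * besselI ((n - 2) / 2) (b * Real.sqrt (x * y) / Real.sinh (b * t))) :
    (∫ y in Set.Ioi (0 : ℝ), Real.exp (-lam * y) * p y)
      = Real.exp (-(x * b / 2)
            * (1 + 2 * lam * b⁻¹ * (Real.cosh (b * t) / Real.sinh (b * t)))
            / (Real.cosh (b * t) / Real.sinh (b * t) + 2 * lam * b⁻¹))
        / (Real.cosh (b * t) + 2 * lam * b⁻¹ * Real.sinh (b * t)) ^ (n / 2) := by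
  have hbt : 0 < b * t := by positivity
  set S := Real.sinh (b * t) with hSdef
  set C := Real.cosh (b * t) with hCdef
  have hS : 0 < S := Real.sinh_pos_iff.2 hbt
  have hC : 0 < C := Real.cosh_pos _
  have hCS : C ^ 2 - S ^ 2 = 1 := Real.cosh_sq_sub_sinh_sq (b * t)
  set ν : ℝ := (n - 2) / 2 with hνdef
  have hν : 0 ≤ ν := by simp only [hνdef]; linarith
  set α : ℝ := b / (2 * S) with hαdef
  have hα : 0 < α := by positivity
  set β : ℝ := b * C / (2 * S) with hβdef
  have hβ : 0 < β := by positivity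
  set μ : ℝ := lam + β with hμdef
  have hμ : 0 < μ := by positivity
  have hG : ∀ k : ℕ, 0 < Real.Gamma ((k : ℝ) + ν + 1) := by
    intro k
    exact Real.Gamma_pos_of_pos (by positivity)
  set F : ℕ → ℝ → ℝ := fun k y =>
    (α * Real.exp (-(β * x)) * α ^ (2 * (k : ℝ) + ν) * x ^ (k : ℝ)
      / ((Nat.factorial k : ℝ) * Real.Gamma ((k : ℝ) + ν + 1)))
      * (y ^ ((k : ℝ) + ν) * Real.exp (-(μ * y))) with hFdef
  -- pointwise identity on Ioi 0
  have hpoint : ∀ y ∈ Set.Ioi (0 : ℝ), Real.exp (-lam * y) * p y = ∑' k, F k y := by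
    intro y hy
    have hy' : (0 : ℝ) < y := hy
    have htanh : Real.tanh (b * t) = S / C := Real.tanh_eq_sinh_div_cosh _
    have harg : b * Real.sqrt (x * y) / S / 2 = α * Real.sqrt (x * y) := by
      rw [hαdef]; field_simp
    rw [hp y]
    simp only [besselI, harg]
    rw [← mul_assoc, ← tsum_mul_left]
    refine tsum_congr fun k => ?_
    simp only [hFdef]
    have hexp : Real.exp (-lam * y) * Real.exp (-b * (x + y) / (2 * Real.tanh (b * t)))
        = Real.exp (-(β * x)) * Real.exp (-(μ * y)) := by
      rw [← Real.exp_add, ← Real.exp_add, htanh]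
      congr 1
      rw [hμdef, hβdef]
      field_simp
      ring
    have hsq : Real.sqrt (x * y) = x ^ (1/2 : ℝ) * y ^ (1/2 : ℝ) := by
      rw [Real.sqrt_eq_rpow, Real.mul_rpow hx.le hy'.le]
    have hpow : (y / x) ^ (n / 4 - 1/2) * (α * Real.sqrt (x * y)) ^ (2 * (k : ℝ) + ν)
        = α ^ (2 * (k : ℝ) + ν) * x ^ (k : ℝ) * y ^ ((k : ℝ) + ν) := by
      rw [Real.div_rpow hy'.le hx.le, hsq, ← mul_assoc,
        Real.mul_rpow (by positivity) (by positivity),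
        Real.mul_rpow (by positivity) (by positivity),
        ← Real.rpow_mul hx.le, ← Real.rpow_mul hy'.le]
      have h1 : y ^ (n / 4 - 1/2) / x ^ (n / 4 - 1/2)
            * (α ^ (2 * (k : ℝ) + ν) * x ^ ((1/2) * (2 * (k : ℝ) + ν))
              * y ^ ((1/2) * (2 * (k : ℝ) + ν)))
          = α ^ (2 * (k : ℝ) + ν) * (x ^ ((1/2) * (2 * (k : ℝ) + ν)) / x ^ (n / 4 - 1/2))
            * (y ^ (n / 4 - 1/2) * y ^ ((1/2) * (2 * (k : ℝ) + ν))) := by ring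
      rw [h1, ← Real.rpow_sub hx, ← Real.rpow_add hy']
      rw [show (1/2) * (2 * (k : ℝ) + ν) - (n / 4 - 1/2) = (k : ℝ) by rw [hνdef]; ring,
        show (n / 4 - 1/2) + (1/2) * (2 * (k : ℝ) + ν) = (k : ℝ) + ν by rw [hνdef]; ring]
    calc Real.exp (-lam * y) * (α * (y / x) ^ (n / 4 - 1/2)
            * Real.exp (-b * (x + y) / (2 * Real.tanh (b * t))))
          * ((α * Real.sqrt (x * y)) ^ (2 * (k : ℝ) + ν)
            / ((Nat.factorial k : ℝ) * Real.Gamma ((k : ℝ) + ν + 1)))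
        = (Real.exp (-lam * y) * Real.exp (-b * (x + y) / (2 * Real.tanh (b * t))))
          * ((y / x) ^ (n / 4 - 1/2) * (α * Real.sqrt (x * y)) ^ (2 * (k : ℝ) + ν))
          * α / ((Nat.factorial k : ℝ) * Real.Gamma ((k : ℝ) + ν + 1)) := by ring
      _ = (Real.exp (-(β * x)) * Real.exp (-(μ * y)))
          * (α ^ (2 * (k : ℝ) + ν) * x ^ (k : ℝ) * y ^ ((k : ℝ) + ν))
          * α / ((Nat.factorial k : ℝ) * Real.Gamma ((k : ℝ) + ν + 1)) := by rw [hexp, hpow]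
      _ = α * Real.exp (-(β * x)) * α ^ (2 * (k : ℝ) + ν) * x ^ (k : ℝ)
          / ((Nat.factorial k : ℝ) * Real.Gamma ((k : ℝ) + ν + 1))
          * (y ^ ((k : ℝ) + ν) * Real.exp (-(μ * y))) := by ring
  -- per-k integral value
  have hval : ∀ k : ℕ, (∫ y in Set.Ioi (0 : ℝ), F k y)
      = (Real.exp (-(β * x)) * α ^ (ν + 1) * (1 / μ) ^ (ν + 1))
        * ((α ^ 2 * x / μ) ^ k / (Nat.factorial k : ℝ)) := by
    intro k
    clear_value S C ν α β μ
    have ha : (0:ℝ) < (k : ℝ) + ν + 1 := by positivity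
    simp only [hFdef]
    rw [integral_const_mul]
    rw [show ((k : ℝ) + ν) = ((k : ℝ) + ν + 1) - 1 by ring]
    rw [Real.integral_rpow_mul_exp_neg_mul_Ioi ha hμ]
    have e1 : α ^ (2 * (k : ℝ) + ν) = (α ^ 2) ^ k * α ^ ν := by
      rw [Real.rpow_add hα, Real.rpow_mul hα.le, Real.rpow_two, Real.rpow_natCast]
    have e2 : (1 / μ) ^ ((k : ℝ) + ν + 1) = (1 / μ) ^ k * (1 / μ) ^ (ν + 1) := by
      rw [show (k : ℝ) + ν + 1 = (k : ℝ) + (ν + 1) by ring,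
        Real.rpow_add (by positivity), Real.rpow_natCast]
    have e3 : α ^ (ν + 1) = α ^ ν * α := Real.rpow_add_one hα.ne' ν
    rw [e1, e2, e3, Real.rpow_natCast,
      show α ^ 2 * x / μ = α ^ 2 * x * (1 / μ) from by ring, mul_pow, mul_pow]
    have hΓ := (hG k).ne'
    have hfac : ((Nat.factorial k : ℝ)) ≠ 0 := by positivity
    field_simp
    ring_nf
    exact mul_inv_cancel₀ (by convert hΓ using 2; ring)
  -- integrability of each F k
  have hint : ∀ k : ℕ, IntegrableOn (F k) (Set.Ioi (0 : ℝ)) := by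
    intro k
    have hs : (-1:ℝ) < (k : ℝ) + ν := by
      have : (0:ℝ) ≤ (k : ℝ) := Nat.cast_nonneg k
      linarith
    have h0 := integrableOn_rpow_mul_exp_neg_mul_rpow hs one_pos hμ
    simp only [Real.rpow_one, neg_mul] at h0
    simpa only [hFdef, neg_mul, IntegrableOn] using h0.const_mul _
  -- nonnegativity on Ioi 0
  have hFnn : ∀ k : ℕ, ∀ y ∈ Set.Ioi (0 : ℝ), 0 ≤ F k y := by
    intro k y hy
    have hy' : (0 : ℝ) < y := hy
    simp only [hFdef]
    positivity
  have hnorm : ∀ k : ℕ, (∫ y in Set.Ioi (0 : ℝ), ‖F k y‖) = ∫ y in Set.Ioi (0 : ℝ), F k y := by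
    intro k
    refine setIntegral_congr_fun measurableSet_Ioi fun y hy => ?_
    exact Real.norm_of_nonneg (hFnn k y hy)
  have hsum : Summable fun k : ℕ => ∫ y in Set.Ioi (0 : ℝ), ‖F k y‖ := by
    simp only [hnorm]
    simp only [hval]
    exact (Real.summable_pow_div_factorial _).mul_left _
  have hswap : (∫ y in Set.Ioi (0 : ℝ), ∑' k, F k y)
      = ∑' k, ∫ y in Set.Ioi (0 : ℝ), F k y :=
    (MeasureTheory.integral_tsum_of_summable_integral_norm hint hsum).symm
  have hLHS : (∫ y in Set.Ioi (0 : ℝ), Real.exp (-lam * y) * p y)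
      = (Real.exp (-(β * x)) * α ^ (ν + 1) * (1 / μ) ^ (ν + 1))
          * Real.exp (α ^ 2 * x / μ) := by
    rw [setIntegral_congr_fun measurableSet_Ioi hpoint, hswap]
    simp only [hval]
    rw [tsum_mul_left, bes_exp_tsum]
  rw [hLHS]
  -- final algebra
  have hbase : C + 2 * lam * b⁻¹ * S = μ / α := by
    rw [hμdef, hβdef, hαdef]
    field_simp
    ring
  have hE : -(β * x) + α ^ 2 * x / μ
      = -(x * b / 2) * (1 + 2 * lam * b⁻¹ * (C / S)) / (C / S + 2 * lam * b⁻¹) := by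
    have hden : C / S + 2 * lam * b⁻¹ ≠ 0 := by positivity
    have hμ' : μ ≠ 0 := hμ.ne'
    rw [hμdef, hβdef, hαdef] at *
    field_simp
    linear_combination (-(C*b^2) - 2*S*lam*b) * hCS
  rw [hbase, show n / 2 = ν + 1 from by rw [hνdef]; ring, ← hE, Real.exp_add]
  have hμα : (0:ℝ) < μ / α := by positivity
  rw [eq_div_iff (by positivity : ((μ / α) ^ (ν+1) : ℝ) ≠ 0)]
  rw [show (1/μ : ℝ) = (μ)⁻¹ by ring]
  have hone : α ^ (ν+1) * μ⁻¹ ^ (ν+1) * (μ / α) ^ (ν+1) = 1 := by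
    rw [← Real.mul_rpow hα.le (by positivity), ← Real.mul_rpow (by positivity) (by positivity),
      show α * μ⁻¹ * (μ / α) = 1 from by field_simp, Real.one_rpow]
  linear_combination Real.exp (-(β * x)) * Real.exp (α ^ 2 * x / μ) * hone
end

section
/- Let σ > 0, μ ≥ 0, A > 0, and B, C be real with 2C + 4μσ + σ² > 0, and set ν = √(2C + 4μσ + σ²)/σ; assume ν is not an integer. Let f : (0,∞) → ℝ be differentiable and satisfy the Riccati equation σ x f'(x) − σ f(x) + (1/2) f(x)² = (1/2) A x² + B x + C for all x > 0, and let F : (0,∞) → ℝ be differentiable with F'(x) = f(x)/x. Fix y > 0 and real constants C₁, C₂, and define for t > 0, x > 0: p(t,x,y) = ( √A e^{(F(y) − F(x))/(2σ)} / (2σ sinh(√A t/2)) ) √(x/y) exp( −Bt/(2σ) − √A (x+y)/(2σ tanh(√A t/2)) ) · ( C₁ I_ν( √(Axy)/(σ sinh(√A t/2)) ) + C₂ I_{−ν}( √(Axy)/(σ sinh(√A t/2)) ) ). Then for all t > 0 and x > 0, ∂_t p = σ x ∂²_x p + f(x) ∂_x p − (μ/x) p. -/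
open Real MeasureTheory

noncomputable def besselG (ρ w : ℝ) : ℝ :=
  ∑' k : ℕ, w ^ k / ((Nat.factorial k : ℝ) * Real.Gamma ((k : ℝ) + ρ + 1))

lemma summable_ratio_master (ρ c : ℝ) (hc : 0 ≤ c) :
    Summable (fun k : ℕ => ((k : ℝ) + 1) * c ^ k
      / ((Nat.factorial k : ℝ) * |Real.Gamma ((k : ℝ) + ρ + 1)|)) := by
  obtain ⟨N, hN⟩ := exists_nat_ge (4 * c + |ρ| + 4)
  apply summable_of_ratio_norm_eventually_le (r := 1/2) (by norm_num)
  filter_upwards [Filter.eventually_ge_atTop N] with k hk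
  have hkN : (N : ℝ) ≤ (k : ℝ) := by exact_mod_cast hk
  have hkk : 4 * c + |ρ| + 4 ≤ (k : ℝ) := le_trans hN hkN
  have hρ : |ρ| ≤ (k : ℝ) := by linarith
  have h1 : (1 : ℝ) ≤ (k : ℝ) + ρ + 1 := by
    have := neg_abs_le ρ; linarith
  have hΓpos : 0 < Real.Gamma ((k : ℝ) + ρ + 1) :=
    Real.Gamma_pos_of_pos (by linarith)
  have hΓrec : Real.Gamma (((k : ℕ) + 1 : ℕ) + ρ + 1)
      = ((k : ℝ) + ρ + 1) * Real.Gamma ((k : ℝ) + ρ + 1) := by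
    push_cast
    rw [show (k : ℝ) + 1 + ρ + 1 = ((k : ℝ) + ρ + 1) + 1 by ring,
      Real.Gamma_add_one (by linarith)]
  have hfac : ((Nat.factorial (k + 1) : ℕ) : ℝ)
      = ((k : ℝ) + 1) * (Nat.factorial k : ℝ) := by
    rw [Nat.factorial_succ]; push_cast; ring
  have hfk : (0 : ℝ) < (Nat.factorial k : ℝ) := by positivity
  rw [Real.norm_eq_abs, Real.norm_eq_abs]
  have hterm : ∀ m : ℕ, |((m : ℝ) + 1) * c ^ m
      / ((Nat.factorial m : ℝ) * |Real.Gamma ((m : ℝ) + ρ + 1)|)|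
      = ((m : ℝ) + 1) * c ^ m / ((Nat.factorial m : ℝ) * |Real.Gamma ((m : ℝ) + ρ + 1)|) := by
    intro m
    apply abs_of_nonneg
    positivity
  rw [hterm, hterm, hΓrec, hfac]
  rw [abs_mul, abs_of_pos hΓpos, abs_of_pos (show (0:ℝ) < (k : ℝ) + ρ + 1 by linarith)]
  rw [show (1:ℝ)/2 * (((k:ℝ)+1)*c^k/((Nat.factorial k : ℝ)*Real.Gamma ((k:ℝ)+ρ+1)))
      = (((k:ℝ)+1)*c^k)/(2*((Nat.factorial k : ℝ)*Real.Gamma ((k:ℝ)+ρ+1))) by ring]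
  rw [div_le_div_iff₀ (by positivity) (by positivity)]
  push_cast
  have hck : c ^ (k + 1) = c * c ^ k := by ring
  rw [hck]
  have hD : (0:ℝ) ≤ c ^ k * ((Nat.factorial k : ℝ) * Real.Gamma ((k:ℝ)+ρ+1)) := by positivity
  have key : ((k:ℝ)+2)*(2*c) ≤ ((k:ℝ)+1)^2*((k:ℝ)+ρ+1) := by
    have h2 : ((k:ℝ)+2)*(2*c) ≤ ((k:ℝ)+1)^2 := by
      have habs : (0:ℝ) ≤ |ρ| := abs_nonneg ρ
      nlinarith [mul_nonneg (show (0:ℝ) ≤ (k:ℝ)+2 by positivity)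
        (show (0:ℝ) ≤ (k:ℝ)/2 - 2*c by linarith)]
    have h3 : ((k:ℝ)+1)^2 ≤ ((k:ℝ)+1)^2*((k:ℝ)+ρ+1) :=
      le_mul_of_one_le_right (by positivity) h1
    linarith
  nlinarith [mul_le_mul_of_nonneg_right key hD]

lemma summable_besselG (ρ w : ℝ) :
    Summable (fun k : ℕ => w ^ k / ((Nat.factorial k : ℝ) * Real.Gamma ((k : ℝ) + ρ + 1))) := by
  apply Summable.of_norm
  apply Summable.of_nonneg_of_le (fun k => norm_nonneg _)
    (fun k => ?_) (summable_ratio_master ρ |w| (abs_nonneg w))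
  rw [Real.norm_eq_abs, abs_div, abs_pow, abs_mul, Nat.abs_cast]
  have h1 : |w| ^ k ≤ ((k:ℝ)+1) * |w| ^ k := by
    nlinarith [pow_nonneg (abs_nonneg w) k, Nat.cast_nonneg (α := ℝ) k]
  exact div_le_div_of_nonneg_right h1 (by positivity)


lemma besselG_gamma_ne {ρ : ℝ} (hρ : ∀ n : ℤ, ρ ≠ (n : ℝ)) (k : ℕ) :
    Real.Gamma ((k : ℝ) + ρ + 1) ≠ 0 := by
  apply Real.Gamma_ne_zero
  intro m hm
  exact hρ (-(m : ℤ) - (k : ℤ) - 1) (by push_cast; linarith)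

lemma besselG_shift (hρ : ∀ n : ℤ, ρ ≠ (n : ℝ)) : ∀ n : ℤ, ρ + 1 ≠ (n : ℝ) := by
  intro n h
  exact hρ (n - 1) (by push_cast; linarith)

lemma summable_deriv_besselG (ρ w : ℝ) :
    Summable (fun k : ℕ => (k : ℝ) * w ^ (k - 1)
      / ((Nat.factorial k : ℝ) * Real.Gamma ((k : ℝ) + ρ + 1))) := by
  rw [← summable_nat_add_iff 1]
  have : (fun k : ℕ => ((k + 1 : ℕ) : ℝ) * w ^ ((k + 1) - 1)
      / ((Nat.factorial (k + 1) : ℝ) * Real.Gamma (((k + 1 : ℕ) : ℝ) + ρ + 1)))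
      = fun k : ℕ => w ^ k / ((Nat.factorial k : ℝ) * Real.Gamma ((k : ℝ) + (ρ + 1) + 1)) := by
    funext k
    have hfac : ((Nat.factorial (k + 1) : ℕ) : ℝ)
        = ((k : ℝ) + 1) * (Nat.factorial k : ℝ) := by
      rw [Nat.factorial_succ]; push_cast; ring
    have harg : ((k + 1 : ℕ) : ℝ) + ρ + 1 = (k : ℝ) + (ρ + 1) + 1 := by push_cast; ring
    rw [hfac, harg]
    have hk1 : ((k + 1 : ℕ) : ℝ) = (k : ℝ) + 1 := by push_cast; ring
    rw [hk1]
    have h : ((k : ℝ) + 1) ≠ 0 := by positivity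
    simp only [Nat.add_sub_cancel]
    rw [mul_assoc, mul_div_mul_left _ _ h]
  rw [this]
  exact summable_besselG (ρ + 1) w

lemma deriv_sum_eq_besselG (ρ w : ℝ) :
    (∑' k : ℕ, (k : ℝ) * w ^ (k - 1)
      / ((Nat.factorial k : ℝ) * Real.Gamma ((k : ℝ) + ρ + 1)))
      = besselG (ρ + 1) w := by
  rw [Summable.tsum_eq_zero_add (summable_deriv_besselG ρ w)]
  simp only [Nat.cast_zero, zero_mul, zero_div, zero_add]
  unfold besselG
  apply tsum_congr
  intro k
  have hfac : ((Nat.factorial (k + 1) : ℕ) : ℝ)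
      = ((k : ℝ) + 1) * (Nat.factorial k : ℝ) := by
    rw [Nat.factorial_succ]; push_cast; ring
  have harg : ((k + 1 : ℕ) : ℝ) + ρ + 1 = (k : ℝ) + (ρ + 1) + 1 := by push_cast; ring
  rw [hfac, harg]
  have hk1 : ((k + 1 : ℕ) : ℝ) = (k : ℝ) + 1 := by push_cast; ring
  rw [hk1]
  have h : ((k : ℝ) + 1) ≠ 0 := by positivity
  simp only [Nat.add_sub_cancel]
  rw [mul_assoc, mul_div_mul_left _ _ h]

lemma hasDerivAt_besselG (ρ w : ℝ) :
    HasDerivAt (besselG ρ) (besselG (ρ + 1) w) w := by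
  rw [← deriv_sum_eq_besselG ρ w]
  set R : ℝ := |w| + 1 with hR
  have hR1 : 1 ≤ R := by simp [hR, abs_nonneg]
  have hball : w ∈ Metric.ball (0 : ℝ) R := by
    simp [hR, Real.norm_eq_abs]
  have key := hasDerivAt_tsum_of_isPreconnected
    (u := fun k : ℕ => ((k : ℝ) + 1) * R ^ k
      / ((Nat.factorial k : ℝ) * |Real.Gamma ((k : ℝ) + ρ + 1)|))
    (g := fun (k : ℕ) (z : ℝ) => z ^ k / ((Nat.factorial k : ℝ) * Real.Gamma ((k : ℝ) + ρ + 1)))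
    (g' := fun (k : ℕ) (z : ℝ) => (k : ℝ) * z ^ (k - 1)
      / ((Nat.factorial k : ℝ) * Real.Gamma ((k : ℝ) + ρ + 1)))
    (summable_ratio_master ρ R (by positivity)) Metric.isOpen_ball
    (convex_ball (0:ℝ) R).isPreconnected
    (fun k z _ => (hasDerivAt_pow k z).div_const _)
    (fun k z hz => ?_) hball (summable_besselG ρ w) hball
  · exact key
  · have hzR : |z| ≤ R := by
      rw [Metric.mem_ball, Real.dist_eq, sub_zero] at hz; linarith
    rcases eq_or_ne (Real.Gamma ((k : ℝ) + ρ + 1)) 0 with h0 | h0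
    · simp [h0]
    · rw [Real.norm_eq_abs, abs_div, abs_mul, abs_mul, Nat.abs_cast, Nat.abs_cast]
      apply div_le_div_of_nonneg_right ?_ (by positivity)
      match k with
      | 0 => simp
      | (m+1) =>
        simp only [Nat.add_sub_cancel]
        rw [abs_pow]
        push_cast
        have h1 : |z| ^ m ≤ R ^ m := pow_le_pow_left₀ (abs_nonneg z) hzR m
        have h2 : R ^ m ≤ R ^ (m + 1) := pow_le_pow_right₀ hR1 (Nat.le_succ m)
        nlinarith [pow_nonneg (abs_nonneg z) m, pow_nonneg (show (0:ℝ) ≤ R by linarith) m,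
          Nat.cast_nonneg (α := ℝ) m]

lemma besselG_rec {ρ : ℝ} (hρ : ∀ n : ℤ, ρ ≠ (n : ℝ)) (w : ℝ) :
    besselG ρ w = w * besselG (ρ + 2) w + (ρ + 1) * besselG (ρ + 1) w := by
  have hne : ∀ k : ℕ, ((k : ℝ) + ρ + 1) ≠ 0 := by
    intro k h
    exact hρ (-(k : ℤ) - 1) (by push_cast; linarith)
  have hΓrec : ∀ k : ℕ, Real.Gamma ((k : ℝ) + (ρ + 1) + 1)
      = ((k : ℝ) + ρ + 1) * Real.Gamma ((k : ℝ) + ρ + 1) := by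
    intro k
    rw [show (k : ℝ) + (ρ + 1) + 1 = ((k : ℝ) + ρ + 1) + 1 by ring,
      Real.Gamma_add_one (hne k)]
  have hΓ1 := besselG_gamma_ne hρ
  have hΓ2 := besselG_gamma_ne (besselG_shift hρ)
  -- termwise identity
  have h1 : ∀ k : ℕ, w ^ k / ((Nat.factorial k : ℝ) * Real.Gamma ((k : ℝ) + ρ + 1))
      - (ρ + 1) * (w ^ k / ((Nat.factorial k : ℝ) * Real.Gamma ((k : ℝ) + (ρ + 1) + 1)))
      = (k : ℝ) * w ^ k / ((Nat.factorial k : ℝ) * Real.Gamma ((k : ℝ) + (ρ + 1) + 1)) := by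
    intro k
    rw [hΓrec k]
    have hg := hΓ1 k
    have hk := hne k
    have hf : ((Nat.factorial k : ℕ) : ℝ) ≠ 0 := by positivity
    field_simp
    ring
  have hsum2 : Summable (fun k : ℕ => (k : ℝ) * w ^ k
      / ((Nat.factorial k : ℝ) * Real.Gamma ((k : ℝ) + (ρ + 1) + 1))) := by
    have := (summable_besselG ρ w).sub
      (((summable_besselG (ρ + 1) w).mul_left (ρ + 1)))
    simpa only [h1] using this
  have hstep : besselG ρ w - (ρ + 1) * besselG (ρ + 1) w
      = ∑' k : ℕ, (k : ℝ) * w ^ k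
        / ((Nat.factorial k : ℝ) * Real.Gamma ((k : ℝ) + (ρ + 1) + 1)) := by
    unfold besselG
    rw [← tsum_mul_left, ← Summable.tsum_sub (summable_besselG ρ w)
      ((summable_besselG (ρ + 1) w).mul_left (ρ + 1))]
    exact tsum_congr h1
  have hshift : (∑' k : ℕ, (k : ℝ) * w ^ k
      / ((Nat.factorial k : ℝ) * Real.Gamma ((k : ℝ) + (ρ + 1) + 1)))
      = w * besselG (ρ + 2) w := by
    rw [Summable.tsum_eq_zero_add hsum2]
    simp only [Nat.cast_zero, zero_mul, zero_div, zero_add]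
    unfold besselG
    rw [← tsum_mul_left]
    apply tsum_congr
    intro k
    have hfac : ((Nat.factorial (k + 1) : ℕ) : ℝ)
        = ((k : ℝ) + 1) * (Nat.factorial k : ℝ) := by
      rw [Nat.factorial_succ]; push_cast; ring
    have harg : ((k + 1 : ℕ) : ℝ) + (ρ + 1) + 1 = (k : ℝ) + (ρ + 2) + 1 := by push_cast; ring
    rw [hfac, harg]
    have hk1 : ((k + 1 : ℕ) : ℝ) = (k : ℝ) + 1 := by push_cast; ring
    rw [hk1]
    have h : ((k : ℝ) + 1) ≠ 0 := by positivity
    have hg := besselG_gamma_ne (besselG_shift (besselG_shift hρ))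
    have hΓ3 : Real.Gamma ((k : ℝ) + (ρ + 2) + 1) ≠ 0 := by
      have := hg k
      convert this using 2
      ring
    have hf : ((Nat.factorial k : ℕ) : ℝ) ≠ 0 := by positivity
    rw [pow_succ]
    field_simp
  linarith [hstep, hshift]

lemma besselI_eq_besselG (ρ : ℝ) {z : ℝ} (hz : 0 < z) :
    besselI ρ z = (z / 2) ^ ρ * besselG ρ ((z / 2) ^ 2) := by
  unfold besselI besselG
  rw [← tsum_mul_left]
  apply tsum_congr
  intro k
  have hz2 : 0 < z / 2 := by linarith
  have h1 : (z / 2) ^ (2 * (k : ℝ) + ρ) = (z / 2) ^ (2 * (k : ℝ)) * (z / 2) ^ ρ := by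
    rw [Real.rpow_add hz2]
  have h2 : (z / 2) ^ (2 * (k : ℝ)) = ((z / 2) ^ 2) ^ k := by
    rw [show 2 * (k : ℝ) = ((2 * k : ℕ) : ℝ) by push_cast; ring, Real.rpow_natCast, pow_mul]
  rw [h1, h2, mul_comm (((z/2)^2) ^ k) ((z/2) ^ ρ), mul_div_assoc]

set_option maxHeartbeats 1000000 in
lemma key_algebra (σ μ A B C ρ x y β u γ g0 g1 g2 E φ φ' : ℝ)
    (hσ : σ ≠ 0) (hx : x ≠ 0)
    (hβ : β ^ 2 = A / (4 * σ ^ 2) + u / σ)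
    (hγ : γ = u * y / σ)
    (hRic : σ * x * φ' - σ * φ + (1 / 2) * φ ^ 2 = (1 / 2) * A * x ^ 2 + B * x + C)
    (hρ2 : ρ ^ 2 * σ ^ 2 = 2 * C + 4 * μ * σ + σ ^ 2)
    (hg0 : g0 = γ * x * g2 + (ρ + 1) * g1) :
    E * ((-(1 + ρ) * (σ * β) - B / (2 * σ) + u * (x + y)) * g0 - 2 * σ * β * γ * x * g1)
      = σ * x * (E * ((((ρ + 1) / (2 * x) - β - φ / (2 * σ * x)) ^ 2
            - (ρ + 1) / (2 * x ^ 2) - (φ' * x - φ) / (2 * σ * x ^ 2)) * g0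
          + 2 * ((ρ + 1) / (2 * x) - β - φ / (2 * σ * x)) * γ * g1 + γ ^ 2 * g2))
        + φ * (E * (((ρ + 1) / (2 * x) - β - φ / (2 * σ * x)) * g0 + γ * g1))
        - μ / x * (E * g0) := by
  have h1 : β ^ 2 * (4 * σ ^ 2) = A + u * (4 * σ) := by
    rw [hβ]; field_simp
  have h2 : γ * σ = u * y := by rw [hγ]; field_simp
  field_simp
  linear_combination 2*E*g0*hRic - E*g0*hρ2 - E*g0*x^2*h1 + 4*σ^2*x*γ*E*hg0 - 4*σ*x*g0*E*h2

namespace S16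

noncomputable def sh (A t : ℝ) : ℝ := Real.sinh (Real.sqrt A * t / 2)
noncomputable def ch (A t : ℝ) : ℝ := Real.cosh (Real.sqrt A * t / 2)
noncomputable def gm (σ A y t : ℝ) : ℝ := A * y / (4 * σ ^ 2 * sh A t ^ 2)
noncomputable def bet (σ A t : ℝ) : ℝ := Real.sqrt A * ch A t / (2 * σ * sh A t)

noncomputable def Epre (σ A B ρ : ℝ) (F : ℝ → ℝ) (y t x : ℝ) : ℝ :=
  (sh A t)⁻¹ * gm σ A y t ^ (ρ / 2) * Real.exp (-(B * t) / (2 * σ))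
    * Real.exp (-(bet σ A t * (x + y))) * x ^ ((ρ + 1) / 2) * Real.exp (-F x / (2 * σ))

noncomputable def Q (σ A B ρ : ℝ) (F : ℝ → ℝ) (y t x : ℝ) : ℝ :=
  Epre σ A B ρ F y t x * besselG ρ (gm σ A y t * x)

noncomputable def aQ (σ A ρ : ℝ) (f : ℝ → ℝ) (t x : ℝ) : ℝ :=
  (ρ + 1) / (2 * x) - bet σ A t - f x / (2 * σ * x)

noncomputable def Q1 (σ A B ρ : ℝ) (f F : ℝ → ℝ) (y t x : ℝ) : ℝ :=
  Epre σ A B ρ F y t x * (aQ σ A ρ f t x * besselG ρ (gm σ A y t * x)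
    + gm σ A y t * besselG (ρ + 1) (gm σ A y t * x))

noncomputable def Q2 (σ A B ρ : ℝ) (f F : ℝ → ℝ) (y t x : ℝ) : ℝ :=
  Epre σ A B ρ F y t x * ((aQ σ A ρ f t x ^ 2 - (ρ + 1) / (2 * x ^ 2)
      - (deriv f x * x - f x) / (2 * σ * x ^ 2)) * besselG ρ (gm σ A y t * x)
    + 2 * aQ σ A ρ f t x * gm σ A y t * besselG (ρ + 1) (gm σ A y t * x)
    + gm σ A y t ^ 2 * besselG (ρ + 2) (gm σ A y t * x))

noncomputable def QT (σ A B ρ : ℝ) (F : ℝ → ℝ) (y t x : ℝ) : ℝ :=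
  Epre σ A B ρ F y t x * ((-(1 + ρ) * (σ * bet σ A t) - B / (2 * σ)
      + A / (4 * σ * sh A t ^ 2) * (x + y)) * besselG ρ (gm σ A y t * x)
    - 2 * σ * bet σ A t * gm σ A y t * x * besselG (ρ + 1) (gm σ A y t * x))

lemma sh_pos {A t : ℝ} (hA : 0 < A) (ht : 0 < t) : 0 < sh A t := by
  unfold sh
  rw [Real.sinh_pos_iff]
  have := Real.sqrt_pos.2 hA
  positivity

lemma pde_pointwise (σ μ A B C ρ : ℝ) (f F : ℝ → ℝ) (y t x : ℝ)
    (hσ : 0 < σ) (hA : 0 < A) (hy : 0 < y) (ht : 0 < t) (hx : 0 < x)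
    (hρint : ∀ n : ℤ, ρ ≠ (n : ℝ))
    (hρ2 : ρ ^ 2 * σ ^ 2 = 2 * C + 4 * μ * σ + σ ^ 2)
    (hRic : σ * x * deriv f x - σ * f x + (1 / 2) * (f x) ^ 2
      = (1 / 2) * A * x ^ 2 + B * x + C) :
    QT σ A B ρ F y t x = σ * x * Q2 σ A B ρ f F y t x
      + f x * Q1 σ A B ρ f F y t x - μ / x * Q σ A B ρ F y t x := by
  have hsh := sh_pos hA ht
  have hch2 : ch A t ^ 2 = sh A t ^ 2 + 1 := by unfold ch sh; exact Real.cosh_sq _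
  have hA2 : Real.sqrt A ^ 2 = A := Real.sq_sqrt hA.le
  have hβ : bet σ A t ^ 2 = A / (4 * σ ^ 2) + (A / (4 * σ * sh A t ^ 2)) / σ := by
    unfold bet
    rw [div_pow, mul_pow, mul_pow, mul_pow, hA2, hch2]
    field_simp
    ring
  have hγ : gm σ A y t = (A / (4 * σ * sh A t ^ 2)) * y / σ := by
    unfold gm; field_simp
  have hg0 : besselG ρ (gm σ A y t * x)
      = gm σ A y t * x * besselG (ρ + 2) (gm σ A y t * x)
        + (ρ + 1) * besselG (ρ + 1) (gm σ A y t * x) := besselG_rec hρint _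
  unfold QT Q2 Q1 Q aQ
  exact key_algebra σ μ A B C ρ x y (bet σ A t) (A / (4 * σ * sh A t ^ 2)) (gm σ A y t)
    (besselG ρ (gm σ A y t * x)) (besselG (ρ + 1) (gm σ A y t * x))
    (besselG (ρ + 2) (gm σ A y t * x)) (Epre σ A B ρ F y t x) (f x) (deriv f x)
    hσ.ne' hx.ne' hβ hγ hRic hρ2 hg0

lemma ch_pos (A t : ℝ) : 0 < ch A t := Real.cosh_pos _

lemma hasDerivAt_Q_x (σ A B ρ : ℝ) (f F : ℝ → ℝ) (y t x : ℝ)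
    (hσ : 0 < σ) (hA : 0 < A) (hy : 0 < y) (ht : 0 < t) (hx : 0 < x)
    (hFx : HasDerivAt F (f x / x) x) :
    HasDerivAt (fun ξ => Q σ A B ρ F y t ξ) (Q1 σ A B ρ f F y t x) x := by
  have hsh := sh_pos hA ht
  have hgm : 0 < gm σ A y t := by unfold gm; positivity
  have h1 : HasDerivAt (fun ξ : ℝ => -(bet σ A t * (ξ + y))) (-bet σ A t) x := by
    exact (((hasDerivAt_id x).add_const y).const_mul (bet σ A t)).neg.congr_deriv (by ring)
  have h1e := h1.exp
  have h2 : HasDerivAt (fun ξ : ℝ => ξ ^ ((ρ + 1) / 2))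
      (((ρ + 1) / 2) * x ^ ((ρ + 1) / 2 - 1)) x :=
    Real.hasDerivAt_rpow_const (Or.inl hx.ne')
  have h3 : HasDerivAt (fun ξ => Real.exp (-F ξ / (2 * σ)))
      (Real.exp (-F x / (2 * σ)) * (-(f x / x) / (2 * σ))) x :=
    ((hFx.neg).div_const (2 * σ)).exp
  have h4 : HasDerivAt (fun ξ => besselG ρ (gm σ A y t * ξ))
      (besselG (ρ + 1) (gm σ A y t * x) * gm σ A y t) x := by
    have := (hasDerivAt_besselG ρ (gm σ A y t * x)).comp x
      ((hasDerivAt_id x).const_mul (gm σ A y t))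
    simpa [Function.comp_def] using this
  have hprod := ((h1e.mul h2).mul h3).mul h4
  have hfun : (fun ξ => Q σ A B ρ F y t ξ) = fun ξ =>
      ((sh A t)⁻¹ * gm σ A y t ^ (ρ / 2) * Real.exp (-(B * t) / (2 * σ))) *
        (Real.exp (-(bet σ A t * (ξ + y))) * ξ ^ ((ρ + 1) / 2)
          * Real.exp (-F ξ / (2 * σ)) * besselG ρ (gm σ A y t * ξ)) := by
    funext ξ; unfold Q Epre; ring
  rw [hfun]
  have hfin := hprod.const_mul
    ((sh A t)⁻¹ * gm σ A y t ^ (ρ / 2) * Real.exp (-(B * t) / (2 * σ)))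
  refine hfin.congr_deriv (Eq.symm ?_)
  simp only [Pi.mul_apply, Pi.neg_apply, Pi.add_apply]
  unfold Q1 Epre aQ
  rw [Real.rpow_sub hx, Real.rpow_one]
  field_simp
  ring

lemma hasDerivAt_Q1_x (σ A B ρ : ℝ) (f F : ℝ → ℝ) (y t x : ℝ)
    (hσ : 0 < σ) (hA : 0 < A) (hy : 0 < y) (ht : 0 < t) (hx : 0 < x)
    (hfd : DifferentiableAt ℝ f x)
    (hFx : HasDerivAt F (f x / x) x) :
    HasDerivAt (fun ξ => Q1 σ A B ρ f F y t ξ) (Q2 σ A B ρ f F y t x) x := by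
  have hsh := sh_pos hA ht
  have hgm : 0 < gm σ A y t := by unfold gm; positivity
  have h1 : HasDerivAt (fun ξ : ℝ => -(bet σ A t * (ξ + y))) (-bet σ A t) x := by
    exact (((hasDerivAt_id x).add_const y).const_mul (bet σ A t)).neg.congr_deriv (by ring)
  have h1e := h1.exp
  have h2 : HasDerivAt (fun ξ : ℝ => ξ ^ ((ρ + 1) / 2))
      (((ρ + 1) / 2) * x ^ ((ρ + 1) / 2 - 1)) x :=
    Real.hasDerivAt_rpow_const (Or.inl hx.ne')
  have h3 : HasDerivAt (fun ξ => Real.exp (-F ξ / (2 * σ)))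
      (Real.exp (-F x / (2 * σ)) * (-(f x / x) / (2 * σ))) x :=
    ((hFx.neg).div_const (2 * σ)).exp
  have h4 : HasDerivAt (fun ξ => besselG ρ (gm σ A y t * ξ))
      (besselG (ρ + 1) (gm σ A y t * x) * gm σ A y t) x := by
    have := (hasDerivAt_besselG ρ (gm σ A y t * x)).comp x
      ((hasDerivAt_id x).const_mul (gm σ A y t))
    simpa [Function.comp_def] using this
  have h4' : HasDerivAt (fun ξ => besselG (ρ + 1) (gm σ A y t * ξ))
      (besselG (ρ + 1 + 1) (gm σ A y t * x) * gm σ A y t) x := by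
    have := (hasDerivAt_besselG (ρ + 1) (gm σ A y t * x)).comp x
      ((hasDerivAt_id x).const_mul (gm σ A y t))
    simpa [Function.comp_def] using this
  have h5 : HasDerivAt (fun ξ : ℝ => (ρ + 1) / (2 * ξ))
      ((0 * (2 * x) - (ρ + 1) * 2) / (2 * x) ^ 2) x := by
    refine HasDerivAt.div (hasDerivAt_const x (ρ + 1)) ?_ (by positivity)
    simpa using (hasDerivAt_id x).const_mul 2
  have h6 : HasDerivAt (fun ξ => f ξ / (2 * σ * ξ))
      ((deriv f x * (2 * σ * x) - f x * (2 * σ)) / (2 * σ * x) ^ 2) x := by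
    refine HasDerivAt.div hfd.hasDerivAt ?_ (by positivity)
    simpa using (hasDerivAt_id x).const_mul (2 * σ)
  have ha : HasDerivAt (fun ξ => aQ σ A ρ f t ξ)
      ((0 * (2 * x) - (ρ + 1) * 2) / (2 * x) ^ 2
        - (deriv f x * (2 * σ * x) - f x * (2 * σ)) / (2 * σ * x) ^ 2) x := by
    unfold aQ
    exact (h5.sub_const (bet σ A t)).sub h6
  have hbr := (ha.mul h4).add (h4'.const_mul (gm σ A y t))
  have hprod := ((h1e.mul h2).mul h3).mul hbr
  have hfun : (fun ξ => Q1 σ A B ρ f F y t ξ) = fun ξ =>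
      ((sh A t)⁻¹ * gm σ A y t ^ (ρ / 2) * Real.exp (-(B * t) / (2 * σ))) *
        (Real.exp (-(bet σ A t * (ξ + y))) * ξ ^ ((ρ + 1) / 2)
          * Real.exp (-F ξ / (2 * σ))
          * (aQ σ A ρ f t ξ * besselG ρ (gm σ A y t * ξ)
            + gm σ A y t * besselG (ρ + 1) (gm σ A y t * ξ))) := by
    funext ξ; unfold Q1 Epre; ring
  rw [hfun]
  have hfin := hprod.const_mul
    ((sh A t)⁻¹ * gm σ A y t ^ (ρ / 2) * Real.exp (-(B * t) / (2 * σ)))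
  refine hfin.congr_deriv (Eq.symm ?_)
  simp only [Pi.mul_apply, Pi.neg_apply, Pi.add_apply]
  unfold Q2 Epre aQ
  rw [Real.rpow_sub hx, Real.rpow_one]
  field_simp
  ring


lemma hasDerivAt_Q_t (σ A B ρ : ℝ) (F : ℝ → ℝ) (y t x : ℝ)
    (hσ : 0 < σ) (hA : 0 < A) (hy : 0 < y) (ht : 0 < t) (hx : 0 < x) :
    HasDerivAt (fun τ => Q σ A B ρ F y τ x) (QT σ A B ρ F y t x) t := by
  have hsh := sh_pos hA ht
  have hgm : 0 < gm σ A y t := by unfold gm; positivity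
  have hA2 : Real.sqrt A ^ 2 = A := Real.sq_sqrt hA.le
  have hch2 : ch A t ^ 2 = sh A t ^ 2 + 1 := by unfold ch sh; exact Real.cosh_sq _
  have hlin : HasDerivAt (fun τ : ℝ => Real.sqrt A * τ / 2) (Real.sqrt A / 2) t := by
    simpa using ((hasDerivAt_id t).const_mul (Real.sqrt A)).div_const 2
  have hsh' : HasDerivAt (fun τ => sh A τ) (Real.sqrt A / 2 * ch A t) t := by
    unfold sh ch
    simpa [mul_comm] using hlin.sinh
  have hch' : HasDerivAt (fun τ => ch A τ) (Real.sqrt A / 2 * sh A t) t := by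
    unfold sh ch
    simpa [mul_comm] using hlin.cosh
  have hshinv : HasDerivAt (fun τ => (sh A τ)⁻¹)
      (-(Real.sqrt A / 2 * ch A t) / sh A t ^ 2) t := hsh'.inv hsh.ne'
  have hgm' : HasDerivAt (fun τ => gm σ A y τ)
      (-(Real.sqrt A * ch A t / sh A t) * gm σ A y t) t := by
    unfold gm
    have hden : HasDerivAt (fun τ => 4 * σ ^ 2 * sh A τ ^ 2)
        (4 * σ ^ 2 * ((2 : ℕ) * sh A t ^ 1 * (Real.sqrt A / 2 * ch A t))) t :=
      (hsh'.pow 2).const_mul (4 * σ ^ 2)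
    have := (hasDerivAt_const t (A * y)).div hden (by positivity)
    refine this.congr_deriv (Eq.symm ?_)
    field_simp
    ring
  have hrpow : HasDerivAt (fun τ => gm σ A y τ ^ (ρ / 2))
      (-(ρ / 2) * (Real.sqrt A * ch A t / sh A t) * gm σ A y t ^ (ρ / 2)) t := by
    have hr := (Real.hasDerivAt_rpow_const (x := gm σ A y t) (p := ρ / 2)
      (Or.inl hgm.ne')).comp t hgm'
    simp only [Function.comp_def] at hr
    refine hr.congr_deriv (Eq.symm ?_)
    rw [Real.rpow_sub hgm, Real.rpow_one]
    field_simp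
  have hexpB : HasDerivAt (fun τ => Real.exp (-(B * τ) / (2 * σ)))
      (Real.exp (-(B * t) / (2 * σ)) * (-B / (2 * σ))) t := by
    have h : HasDerivAt (fun τ : ℝ => -(B * τ) / (2 * σ)) (-B / (2 * σ)) t := by
      have := (((hasDerivAt_id t).const_mul B).neg).div_const (2 * σ)
      refine this.congr_deriv (Eq.symm ?_)
      ring
    exact h.exp
  have hbet' : HasDerivAt (fun τ => bet σ A τ) (-A / (4 * σ * sh A t ^ 2)) t := by
    unfold bet
    have hnum : HasDerivAt (fun τ => Real.sqrt A * ch A τ)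
        (Real.sqrt A * (Real.sqrt A / 2 * sh A t)) t := hch'.const_mul (Real.sqrt A)
    have hden : HasDerivAt (fun τ => 2 * σ * sh A τ)
        (2 * σ * (Real.sqrt A / 2 * ch A t)) t := hsh'.const_mul (2 * σ)
    have := hnum.div hden (by positivity)
    refine this.congr_deriv (Eq.symm ?_)
    field_simp
    linear_combination (4 * Real.sqrt A ^ 2) * hch2 + 4 * hA2
  have hexpbet : HasDerivAt (fun τ => Real.exp (-(bet σ A τ * (x + y))))
      (Real.exp (-(bet σ A t * (x + y))) * (A / (4 * σ * sh A t ^ 2) * (x + y))) t := by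
    have h := ((hbet'.mul_const (x + y)).neg).exp
    refine h.congr_deriv (Eq.symm ?_)
    simp only [Pi.mul_apply, Pi.neg_apply, Pi.add_apply]
    ring
  have hbG : HasDerivAt (fun τ => besselG ρ (gm σ A y τ * x))
      (besselG (ρ + 1) (gm σ A y t * x)
        * (-(Real.sqrt A * ch A t / sh A t) * gm σ A y t * x)) t := by
    have := (hasDerivAt_besselG ρ (gm σ A y t * x)).comp t (hgm'.mul_const x)
    exact this
  have hprod := (((hshinv.mul hrpow).mul hexpB).mul hexpbet).mul hbG
  have hfun : (fun τ => Q σ A B ρ F y τ x) = fun τ =>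
      (x ^ ((ρ + 1) / 2) * Real.exp (-F x / (2 * σ))) *
        ((sh A τ)⁻¹ * gm σ A y τ ^ (ρ / 2) * Real.exp (-(B * τ) / (2 * σ))
          * Real.exp (-(bet σ A τ * (x + y))) * besselG ρ (gm σ A y τ * x)) := by
    funext τ; unfold Q Epre; ring
  rw [hfun]
  have hfin := hprod.const_mul (x ^ ((ρ + 1) / 2) * Real.exp (-F x / (2 * σ)))
  refine hfin.congr_deriv (Eq.symm ?_)
  simp only [Pi.mul_apply, Pi.neg_apply, Pi.add_apply]
  unfold QT Epre bet
  field_simp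
  ring


lemma rpow_sq_half (ρ : ℝ) {w : ℝ} (hw : 0 ≤ w) : (w ^ 2) ^ (ρ / 2) = w ^ ρ := by
  rw [← Real.rpow_natCast w 2, ← Real.rpow_mul hw]
  norm_num
  congr 1
  ring

lemma formula_eq (σ A B ν : ℝ) (F : ℝ → ℝ) (y C₁ C₂ t x : ℝ)
    (hσ : 0 < σ) (hA : 0 < A) (hy : 0 < y) (ht : 0 < t) (hx : 0 < x) :
    (Real.sqrt A * Real.exp ((F y - F x) / (2 * σ))
          / (2 * σ * Real.sinh (Real.sqrt A * t / 2)))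
        * Real.sqrt (x / y)
        * Real.exp (-B * t / (2 * σ)
            - Real.sqrt A * (x + y) / (2 * σ * Real.tanh (Real.sqrt A * t / 2)))
        * (C₁ * besselI ν (Real.sqrt (A * x * y) / (σ * Real.sinh (Real.sqrt A * t / 2)))
          + C₂ * besselI (-ν)
              (Real.sqrt (A * x * y) / (σ * Real.sinh (Real.sqrt A * t / 2))))
      = (Real.sqrt A * Real.exp (F y / (2 * σ)) / (2 * σ * Real.sqrt y)) * C₁
          * Q σ A B ν F y t x
        + (Real.sqrt A * Real.exp (F y / (2 * σ)) / (2 * σ * Real.sqrt y)) * C₂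
          * Q σ A B (-ν) F y t x := by
  have hsh : 0 < sh A t := sh_pos hA ht
  have hch : 0 < ch A t := ch_pos A t
  have hgm : 0 < gm σ A y t := by unfold gm; positivity
  have hshdef : Real.sinh (Real.sqrt A * t / 2) = sh A t := rfl
  have hz : 0 < Real.sqrt (A * x * y) / (σ * sh A t) := by
    have : 0 < Real.sqrt (A * x * y) := Real.sqrt_pos.2 (by positivity)
    positivity
  have hzsq : (Real.sqrt (A * x * y) / (σ * sh A t) / 2) ^ 2 = gm σ A y t * x := by
    rw [div_div, div_pow, Real.sq_sqrt (by positivity : (0:ℝ) ≤ A * x * y)]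
    unfold gm
    field_simp
    ring
  have hbess : ∀ ρ : ℝ, besselI ρ (Real.sqrt (A * x * y) / (σ * sh A t))
      = gm σ A y t ^ (ρ / 2) * x ^ (ρ / 2) * besselG ρ (gm σ A y t * x) := by
    intro ρ
    rw [besselI_eq_besselG ρ hz, hzsq, ← rpow_sq_half ρ (le_of_lt (by positivity :
      (0:ℝ) < Real.sqrt (A * x * y) / (σ * sh A t) / 2)), hzsq,
      Real.mul_rpow hgm.le hx.le]
  have htanh : -B * t / (2 * σ)
      - Real.sqrt A * (x + y) / (2 * σ * Real.tanh (Real.sqrt A * t / 2))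
      = -(B * t) / (2 * σ) + -(bet σ A t * (x + y)) := by
    rw [Real.tanh_eq_sinh_div_cosh, hshdef]
    show _ - _ / (2 * σ * (sh A t / ch A t)) = _
    unfold bet
    field_simp
    ring
  have hexpF : Real.exp ((F y - F x) / (2 * σ))
      = Real.exp (F y / (2 * σ)) * Real.exp (-F x / (2 * σ)) := by
    rw [← Real.exp_add]
    congr 1
    ring
  have hxsplit : ∀ ρ : ℝ, x ^ ((ρ + 1) / 2) = x ^ ((1:ℝ)/2) * x ^ (ρ / 2) := by
    intro ρ
    rw [← Real.rpow_add hx]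
    congr 1
    ring
  rw [hshdef, hbess ν, hbess (-ν), htanh, Real.exp_add, hexpF,
    Real.sqrt_div hx.le, Real.sqrt_eq_rpow x]
  unfold Q Epre
  rw [hxsplit ν, hxsplit (-ν)]
  field_simp

end S16

/-- The fundamental solution formula of Theorem 5.7 for the PDE
`u_t = σ x u_xx + f(x) u_x - (μ/x) u` when the drift `f` solves the Riccati equation
`σ x f' - σ f + f²/2 = (1/2)Ax² + Bx + C` with `A > 0`. -/
theorem stmt_16 (σ μ A B C ν : ℝ) (hσ : 0 < σ) (hμ : 0 ≤ μ) (hA : 0 < A)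
    (hC : 0 < 2 * C + 4 * μ * σ + σ ^ 2)
    (hν : ν = Real.sqrt (2 * C + 4 * μ * σ + σ ^ 2) / σ) (hνint : ∀ n : ℤ, ν ≠ (n : ℝ))
    (f F : ℝ → ℝ)
    (hf : ∀ x > (0 : ℝ), DifferentiableAt ℝ f x)
    (hRic : ∀ x > (0 : ℝ),
      σ * x * deriv f x - σ * f x + (1 / 2) * (f x) ^ 2
        = (1 / 2) * A * x ^ 2 + B * x + C)
    (hF : ∀ x > (0 : ℝ), HasDerivAt F (f x / x) x)
    (y : ℝ) (hy : 0 < y) (C₁ C₂ : ℝ)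
    (p : ℝ → ℝ → ℝ)
    (hp : ∀ t x, p t x =
      (Real.sqrt A * Real.exp ((F y - F x) / (2 * σ))
          / (2 * σ * Real.sinh (Real.sqrt A * t / 2)))
        * Real.sqrt (x / y)
        * Real.exp (-B * t / (2 * σ)
            - Real.sqrt A * (x + y) / (2 * σ * Real.tanh (Real.sqrt A * t / 2)))
        * (C₁ * besselI ν (Real.sqrt (A * x * y) / (σ * Real.sinh (Real.sqrt A * t / 2)))
          + C₂ * besselI (-ν)
              (Real.sqrt (A * x * y) / (σ * Real.sinh (Real.sqrt A * t / 2))))) :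
    ∀ t > (0 : ℝ), ∀ x > (0 : ℝ),
      deriv (fun τ => p τ x) t
        = σ * x * deriv (deriv (fun ξ => p t ξ)) x
          + f x * deriv (fun ξ => p t ξ) x - (μ / x) * p t x := by
  intro t ht x hx
  set K := Real.sqrt A * Real.exp (F y / (2 * σ)) / (2 * σ * Real.sqrt y) with hK
  have hν2 : ν ^ 2 * σ ^ 2 = 2 * C + 4 * μ * σ + σ ^ 2 := by
    rw [hν, div_pow, Real.sq_sqrt hC.le]
    field_simp
  have hν2' : (-ν) ^ 2 * σ ^ 2 = 2 * C + 4 * μ * σ + σ ^ 2 := by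
    rw [neg_pow]
    simpa using hν2
  have hνint' : ∀ n : ℤ, (-ν) ≠ (n : ℝ) := by
    intro n h
    apply hνint (-n)
    push_cast at h ⊢
    linarith
  have hRx := hRic x hx
  have hfd := hf x hx
  have hFx := hF x hx
  have hpt : ∀ τ > (0:ℝ), ∀ ξ > (0:ℝ), p τ ξ
      = K * C₁ * S16.Q σ A B ν F y τ ξ + K * C₂ * S16.Q σ A B (-ν) F y τ ξ := by
    intro τ hτ ξ hξ
    rw [hp]
    exact S16.formula_eq σ A B ν F y C₁ C₂ τ ξ hσ hA hy hτ hξ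
  -- time derivative
  have hQt : HasDerivAt
      (fun τ => K * C₁ * S16.Q σ A B ν F y τ x + K * C₂ * S16.Q σ A B (-ν) F y τ x)
      (K * C₁ * S16.QT σ A B ν F y t x + K * C₂ * S16.QT σ A B (-ν) F y t x) t :=
    ((S16.hasDerivAt_Q_t σ A B ν F y t x hσ hA hy ht hx).const_mul (K * C₁)).add
      ((S16.hasDerivAt_Q_t σ A B (-ν) F y t x hσ hA hy ht hx).const_mul (K * C₂))
  have hEvt : (fun τ => p τ x) =ᶠ[nhds t]
      (fun τ => K * C₁ * S16.Q σ A B ν F y τ x + K * C₂ * S16.Q σ A B (-ν) F y τ x) := by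
    filter_upwards [eventually_gt_nhds ht] with τ hτ
    exact hpt τ hτ x hx
  have hdt : deriv (fun τ => p τ x) t
      = K * C₁ * S16.QT σ A B ν F y t x + K * C₂ * S16.QT σ A B (-ν) F y t x :=
    (hQt.congr_of_eventuallyEq hEvt).deriv
  -- first spatial derivative, as a function on the positive reals
  have hd1 : ∀ x' > (0:ℝ), deriv (fun ξ => p t ξ) x'
      = K * C₁ * S16.Q1 σ A B ν f F y t x' + K * C₂ * S16.Q1 σ A B (-ν) f F y t x' := by
    intro x' hx'
    have hQx : HasDerivAt
        (fun ξ => K * C₁ * S16.Q σ A B ν F y t ξ + K * C₂ * S16.Q σ A B (-ν) F y t ξ)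
        (K * C₁ * S16.Q1 σ A B ν f F y t x' + K * C₂ * S16.Q1 σ A B (-ν) f F y t x') x' :=
      ((S16.hasDerivAt_Q_x σ A B ν f F y t x' hσ hA hy ht hx' (hF x' hx')).const_mul (K * C₁)).add
        ((S16.hasDerivAt_Q_x σ A B (-ν) f F y t x' hσ hA hy ht hx' (hF x' hx')).const_mul (K * C₂))
    have hEv : (fun ξ => p t ξ) =ᶠ[nhds x']
        (fun ξ => K * C₁ * S16.Q σ A B ν F y t ξ + K * C₂ * S16.Q σ A B (-ν) F y t ξ) := by
      filter_upwards [eventually_gt_nhds hx'] with ξ hξ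
      exact hpt t ht ξ hξ
    exact (hQx.congr_of_eventuallyEq hEv).deriv
  have hdx := hd1 x hx
  -- second spatial derivative
  have hQ2 : HasDerivAt
      (fun ξ => K * C₁ * S16.Q1 σ A B ν f F y t ξ + K * C₂ * S16.Q1 σ A B (-ν) f F y t ξ)
      (K * C₁ * S16.Q2 σ A B ν f F y t x + K * C₂ * S16.Q2 σ A B (-ν) f F y t x) x :=
    ((S16.hasDerivAt_Q1_x σ A B ν f F y t x hσ hA hy ht hx hfd hFx).const_mul (K * C₁)).add
      ((S16.hasDerivAt_Q1_x σ A B (-ν) f F y t x hσ hA hy ht hx hfd hFx).const_mul (K * C₂))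
  have hEv2 : deriv (fun ξ => p t ξ) =ᶠ[nhds x]
      (fun ξ => K * C₁ * S16.Q1 σ A B ν f F y t ξ + K * C₂ * S16.Q1 σ A B (-ν) f F y t ξ) := by
    filter_upwards [eventually_gt_nhds hx] with ξ hξ
    exact hd1 ξ hξ
  have hdxx : deriv (deriv (fun ξ => p t ξ)) x
      = K * C₁ * S16.Q2 σ A B ν f F y t x + K * C₂ * S16.Q2 σ A B (-ν) f F y t x := by
    rw [hEv2.deriv_eq]
    exact hQ2.deriv
  rw [hdt, hdxx, hdx, hpt t ht x hx]
  have h₁ := S16.pde_pointwise σ μ A B C ν f F y t x hσ hA hy ht hx hνint hν2 hRx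
  have h₂ := S16.pde_pointwise σ μ A B C (-ν) f F y t x hσ hA hy ht hx hνint' hν2' hRx
  linear_combination (K * C₁) * h₁ + (K * C₂) * h₂
end

section
/- Let σ > 0, a > 0, b > 0, μ ≥ 0, and set ν = (1/σ)√((a−σ)² + 4μσ), k = a/(2σ). For t > 0, x > 0, set α = (b/(2σ))(1 + coth(bt/2)) + λ and β = b√x/(2σ sinh(bt/2)), where λ ≥ 0. Then, with p(t,x,y) = ( b/(2σ sinh(bt/2)) ) (y/x)^{a/(2σ) − 1/2} exp( (b/(2σ)) ( at + (x−y) − (x+y)/tanh(bt/2) ) ) I_ν( b√(xy)/(σ sinh(bt/2)) ), one has ∫_0^∞ e^{−λ y} p(t,x,y) dy = ( Γ(k + ν/2 + 1/2)/Γ(ν+1) ) · β x^{−k} · exp( (b/(2σ)) ( at + x − x/tanh(bt/2) ) ) · (1/(β α^k)) e^{β²/(2α)} M_{−k, ν/2}( β²/α ). -/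
open Real MeasureTheory

/-- Kummer's confluent hypergeometric function
`₁F₁(a,b,z) = ∑_{k=0}^∞ ((a)_k/(b)_k) zᵏ/k!`. -/
noncomputable def hyp1F1 (a b z : ℝ) : ℝ :=
  ∑' k : ℕ, ((∏ i ∈ Finset.range k, (a + (i : ℝ))) / (∏ i ∈ Finset.range k, (b + (i : ℝ))))
      * z ^ k / (Nat.factorial k : ℝ)

/-- The Whittaker function of the first kind
`M_{s,r}(z) = z^{r+1/2} e^{-z/2} ₁F₁(r - s + 1/2, 1 + 2r, z)`. -/
noncomputable def whittakerM (s r z : ℝ) : ℝ :=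
  z ^ (r + 1 / 2) * Real.exp (-z / 2) * hyp1F1 (r - s + 1 / 2) (1 + 2 * r) z

lemma gamma_prod (A : ℝ) (hA : 0 < A) (m : ℕ) :
    Real.Gamma (A + m) = Real.Gamma A * ∏ i ∈ Finset.range m, (A + i) := by
  induction m with
  | zero => simp
  | succ n ih =>
    have h1 : A + (n + 1 : ℕ) = (A + n) + 1 := by push_cast; ring
    have h2 : A + (n : ℝ) ≠ 0 := by positivity
    rw [h1, Real.Gamma_add_one h2, ih, Finset.prod_range_succ]
    ring

set_option maxHeartbeats 1000000 in
/-- Corollary 5.9: the expectation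
`E_x(exp(-λX_t - μ ∫_0^t X_s^{-1} ds))` for the CIR process, computed by Laplace
transforming the fundamental solution (5.20). -/
theorem stmt_17 (σ a b μ ν k t x lam α β : ℝ)
    (hσ : 0 < σ) (ha : 0 < a) (hb : 0 < b) (hμ : 0 ≤ μ)
    (hν : ν = (1 / σ) * Real.sqrt ((a - σ) ^ 2 + 4 * μ * σ))
    (hk : k = a / (2 * σ))
    (ht : 0 < t) (hx : 0 < x) (hlam : 0 ≤ lam)
    (hα : α = (b / (2 * σ)) * (1 + Real.cosh (b * t / 2) / Real.sinh (b * t / 2)) + lam)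
    (hβ : β = b * Real.sqrt x / (2 * σ * Real.sinh (b * t / 2)))
    (p : ℝ → ℝ)
    (hp : ∀ y, p y = (b / (2 * σ * Real.sinh (b * t / 2)))
        * (y / x) ^ (a / (2 * σ) - 1 / 2)
        * Real.exp ((b / (2 * σ))
            * (a * t + (x - y) - (x + y) / Real.tanh (b * t / 2)))
        * besselI ν (b * Real.sqrt (x * y) / (σ * Real.sinh (b * t / 2)))) :
    (∫ y in Set.Ioi (0 : ℝ), Real.exp (-lam * y) * p y)
      = (Real.Gamma (k + ν / 2 + 1 / 2) / Real.Gamma (ν + 1)) * β * x ^ (-k)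
        * Real.exp ((b / (2 * σ)) * (a * t + x - x / Real.tanh (b * t / 2)))
        * (1 / (β * α ^ k)) * Real.exp (β ^ 2 / (2 * α))
        * whittakerM (-k) (ν / 2) (β ^ 2 / α) := by
  have hs : 0 < Real.sinh (b * t / 2) := Real.sinh_pos_iff.2 (by positivity)
  have hch : (0:ℝ) < Real.cosh (b * t / 2) := Real.cosh_pos _
  have hν0 : 0 ≤ ν := by rw [hν]; positivity
  have hk0 : 0 < k := by rw [hk]; positivity
  have hα0 : 0 < α := by
    rw [hα]
    have h1 : 0 < Real.cosh (b * t / 2) / Real.sinh (b * t / 2) := div_pos hch hs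
    have h2 : (0:ℝ) < 1 + Real.cosh (b * t / 2) / Real.sinh (b * t / 2) := by linarith
    exact add_pos_of_pos_of_nonneg (mul_pos (by positivity) h2) hlam
  have hβ0 : 0 < β := by
    rw [hβ]
    exact div_pos (mul_pos hb (Real.sqrt_pos.2 hx)) (by positivity)
  set A : ℝ := k + ν / 2 + 1 / 2 with hA
  have hA0 : 0 < A := by rw [hA]; linarith
  set E : ℝ := Real.exp ((b / (2 * σ)) * (a * t + x - x / Real.tanh (b * t / 2))) with hE
  set c : ℕ → ℝ := fun m =>
    β * x ^ (-k) * E * β ^ (2 * (m : ℝ) + ν)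
      / ((Nat.factorial m : ℝ) * Real.Gamma ((m : ℝ) + ν + 1)) with hcdef
  set f : ℕ → ℝ → ℝ := fun m y => c m * (y ^ (A + (m : ℝ) - 1) * Real.exp (-(α * y))) with hfdef
  -- Step A: pointwise expansion
  have stepA : ∀ y ∈ Set.Ioi (0:ℝ), Real.exp (-lam * y) * p y = ∑' m : ℕ, f m y := by
    intro y hy
    rw [Set.mem_Ioi] at hy
    have hE1 : Real.exp (-lam * y)
        * Real.exp ((b / (2 * σ)) * (a * t + (x - y) - (x + y) / Real.tanh (b * t / 2)))
        = E * Real.exp (-(α * y)) := by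
      rw [hE, ← Real.exp_add, ← Real.exp_add]
      congr 1
      rw [Real.tanh_eq_sinh_div_cosh, hα, div_div_eq_mul_div, div_div_eq_mul_div]
      field_simp
      ring_nf
    have hpow : (y / x) ^ (k - 1/2) = y ^ (k - 1/2) * (x ^ (1/2 : ℝ) * x ^ (-k)) := by
      rw [Real.div_rpow hy.le hx.le, div_eq_mul_inv, ← Real.rpow_neg hx.le]
      congr 1
      rw [show -(k - 1/2) = 1/2 + -k by ring, Real.rpow_add hx]
    have hβx : b / (2 * σ * Real.sinh (b * t / 2)) * x ^ (1/2 : ℝ) = β := by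
      rw [hβ, Real.sqrt_eq_rpow]
      ring
    have hterm : ∀ m : ℕ, f m y
        = (Real.exp (-lam * y) * ((b / (2 * σ * Real.sinh (b * t / 2)))
            * (y / x) ^ (a / (2 * σ) - 1/2)
            * Real.exp ((b / (2 * σ)) * (a * t + (x - y) - (x + y) / Real.tanh (b * t / 2)))))
          * ((b * Real.sqrt (x * y) / (σ * Real.sinh (b * t / 2)) / 2) ^ (2 * (m : ℝ) + ν)
              / ((Nat.factorial m : ℝ) * Real.Gamma ((m : ℝ) + ν + 1))) := by
      intro m
      have harg : b * Real.sqrt (x * y) / (σ * Real.sinh (b * t / 2)) / 2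
          = β * y ^ (1/2 : ℝ) := by
        rw [Real.sqrt_mul hx.le, hβ, Real.sqrt_eq_rpow y]
        field_simp
      have hbes : (b * Real.sqrt (x * y) / (σ * Real.sinh (b * t / 2)) / 2) ^ (2 * (m : ℝ) + ν)
          = β ^ (2 * (m : ℝ) + ν) * y ^ ((m : ℝ) + ν / 2) := by
        rw [harg, Real.mul_rpow hβ0.le (Real.rpow_nonneg hy.le _), ← Real.rpow_mul hy.le]
        congr 1
        ring
      have hyy : y ^ (k - 1/2) * y ^ ((m : ℝ) + ν / 2) = y ^ (A + (m : ℝ) - 1) := by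
        rw [← Real.rpow_add hy]
        congr 1
        rw [hA]; ring
      simp only [hfdef, hcdef]
      rw [← hk]
      linear_combination
        (-(Real.exp (-lam * y) * (b / (2 * σ * Real.sinh (b * t / 2)))
            * (y / x) ^ (k - 1/2)
            * Real.exp ((b / (2 * σ)) * (a * t + (x - y) - (x + y) / Real.tanh (b * t / 2)))
            / ((Nat.factorial m : ℝ) * Real.Gamma ((m : ℝ) + ν + 1)))) * hbes
        - (Real.exp (-lam * y) * (b / (2 * σ * Real.sinh (b * t / 2)))
            * Real.exp ((b / (2 * σ)) * (a * t + (x - y) - (x + y) / Real.tanh (b * t / 2)))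
            * β ^ (2 * (m : ℝ) + ν) * y ^ ((m : ℝ) + ν / 2)
            / ((Nat.factorial m : ℝ) * Real.Gamma ((m : ℝ) + ν + 1))) * hpow
        - (Real.exp (-lam * y) * y ^ (k - 1/2) * x ^ (-k)
            * Real.exp ((b / (2 * σ)) * (a * t + (x - y) - (x + y) / Real.tanh (b * t / 2)))
            * β ^ (2 * (m : ℝ) + ν) * y ^ ((m : ℝ) + ν / 2)
            / ((Nat.factorial m : ℝ) * Real.Gamma ((m : ℝ) + ν + 1))) * hβx
        - (β * y ^ (k - 1/2) * x ^ (-k) * β ^ (2 * (m : ℝ) + ν) * y ^ ((m : ℝ) + ν / 2)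
            / ((Nat.factorial m : ℝ) * Real.Gamma ((m : ℝ) + ν + 1))) * hE1
        - (β * x ^ (-k) * E * Real.exp (-(α * y)) * β ^ (2 * (m : ℝ) + ν)
            / ((Nat.factorial m : ℝ) * Real.Gamma ((m : ℝ) + ν + 1))) * hyy
    have h := (tsum_congr (L := SummationFilter.unconditional ℕ) hterm).trans (tsum_mul_left)
    rw [hp y, besselI, h]
    ring
  set w : ℝ := β ^ 2 / α with hw
  set u : ℕ → ℝ := fun m =>
    ((∏ i ∈ Finset.range m, (ν / 2 - -k + 1 / 2 + (i : ℝ)))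
        / (∏ i ∈ Finset.range m, (1 + 2 * (ν / 2) + (i : ℝ))))
      * w ^ m / (Nat.factorial m : ℝ) with hudef
  set Cbig : ℝ := Real.Gamma A / Real.Gamma (ν + 1) * β * x ^ (-k) * E * (1 / (β * α ^ k))
      * Real.exp (β ^ 2 / (2 * α)) * (w ^ (ν / 2 + 1 / 2 : ℝ) * Real.exp (-w / 2)) with hCbigdef
  have hw0 : 0 ≤ w := by rw [hw]; positivity
  have hPA : ∀ m : ℕ, (∏ i ∈ Finset.range m, (ν / 2 - -k + 1 / 2 + (i : ℝ)))
      = ∏ i ∈ Finset.range m, (A + (i : ℝ)) :=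
    fun m => Finset.prod_congr rfl (fun i _ => by rw [hA]; ring)
  have hPb : ∀ m : ℕ, (∏ i ∈ Finset.range m, (1 + 2 * (ν / 2) + (i : ℝ)))
      = ∏ i ∈ Finset.range m, (ν + 1 + (i : ℝ)) :=
    fun m => Finset.prod_congr rfl (fun i _ => by ring)
  have hprodb : ∀ m : ℕ, (0:ℝ) < ∏ i ∈ Finset.range m, (ν + 1 + (i : ℝ)) := by
    intro m
    refine Finset.prod_pos fun i _ => ?_
    have : (0:ℝ) ≤ (i : ℝ) := Nat.cast_nonneg i
    linarith
  -- Integral of each term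
  have hInt : ∀ m : ℕ, (∫ y in Set.Ioi (0:ℝ), f m y)
      = c m * ((1 / α) ^ (A + (m:ℝ)) * Real.Gamma (A + (m:ℝ))) := by
    intro m
    have hAm : (0:ℝ) < A + (m:ℝ) := by
      have : (0:ℝ) ≤ (m : ℝ) := Nat.cast_nonneg m
      linarith
    simp only [hfdef]
    rw [MeasureTheory.integral_const_mul]
    congr 1
    exact Real.integral_rpow_mul_exp_neg_mul_Ioi hAm hα0
  -- Integrability of each term
  have hIntg : ∀ m : ℕ, IntegrableOn (f m) (Set.Ioi (0:ℝ)) := by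
    intro m
    have hAm : (-1:ℝ) < A + (m:ℝ) - 1 := by
      have : (0:ℝ) ≤ (m : ℝ) := Nat.cast_nonneg m
      linarith
    have h := integrableOn_rpow_mul_exp_neg_mul_rpow (p := 1) hAm one_pos hα0
    simp only [Real.rpow_one] at h
    simp only [hfdef]
    apply Integrable.const_mul
    simpa [neg_mul] using h.integrable
  -- Nonnegativity of coefficients
  have hc0 : ∀ m : ℕ, 0 ≤ c m := by
    intro m
    have h1 : 0 < Real.Gamma ((m:ℝ) + ν + 1) := by
      apply Real.Gamma_pos_of_pos
      have : (0:ℝ) ≤ (m : ℝ) := Nat.cast_nonneg m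
      linarith
    simp only [hcdef, hE]
    apply div_nonneg
    · exact mul_nonneg (mul_nonneg (mul_nonneg hβ0.le (Real.rpow_nonneg hx.le _))
        (Real.exp_pos _).le) (Real.rpow_nonneg hβ0.le _)
    · exact mul_nonneg (Nat.cast_nonneg _) h1.le
  -- per-term identity with the hypergeometric term
  have htu : ∀ m : ℕ, c m * ((1 / α) ^ (A + (m:ℝ)) * Real.Gamma (A + (m:ℝ))) = Cbig * u m := by
    intro m
    have hΓν1 : (0:ℝ) < Real.Gamma (ν + 1) := Real.Gamma_pos_of_pos (by linarith)
    have hg1 := gamma_prod A hA0 m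
    have hg2 : Real.Gamma ((m:ℝ) + ν + 1)
        = Real.Gamma (ν + 1) * ∏ i ∈ Finset.range m, (ν + 1 + (i : ℝ)) := by
      rw [show ((m:ℝ) + ν + 1) = (ν + 1) + (m:ℝ) by ring]
      exact gamma_prod (ν + 1) (by linarith) m
    have h1α : (0:ℝ) < 1/α := by positivity
    have he1 : ((1:ℝ)/α) ^ (A + (m:ℝ))
        = (α ^ k)⁻¹ * (α ^ (ν/2 + 1/2 : ℝ))⁻¹ * ((α ^ m : ℝ))⁻¹ := by
      rw [show A + (m:ℝ) = k + (ν/2 + 1/2 : ℝ) + ((m:ℕ):ℝ) from by rw [hA]; push_cast; ring]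
      rw [Real.rpow_add h1α, Real.rpow_add h1α, Real.rpow_natCast, one_div,
        Real.inv_rpow hα0.le, Real.inv_rpow hα0.le, inv_pow]
    have he4 : β ^ (2*(m:ℝ)+ν) = (β^2)^m * β^ν := by
      rw [show 2*(m:ℝ)+ν = ((2*m : ℕ):ℝ) + ν from by push_cast; ring,
        Real.rpow_add hβ0, Real.rpow_natCast, pow_mul]
    have he7 : w ^ m = (β^2)^m * ((α ^ m : ℝ))⁻¹ := by
      rw [hw, div_pow, div_eq_mul_inv]
    have hew : w ^ (ν/2 + 1/2 : ℝ) = β^ν * β * (α ^ (ν/2 + 1/2 : ℝ))⁻¹ := by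
      rw [hw, Real.div_rpow (by positivity) hα0.le, ← Real.rpow_natCast β 2,
        ← Real.rpow_mul hβ0.le, show (2:ℕ) * (ν/2 + 1/2 : ℝ) = ν + 1 from by push_cast; ring,
        Real.rpow_add hβ0, Real.rpow_one, div_eq_mul_inv]
    have he5 : Real.exp (-w / 2) = (Real.exp (β ^ 2 / (2 * α)))⁻¹ := by
      rw [← Real.exp_neg]
      congr 1
      rw [hw]
      ring
    have hfact : ((Nat.factorial m : ℝ)) ≠ 0 := Nat.cast_ne_zero.2 m.factorial_ne_zero
    have hαk : (0:ℝ) < α ^ k := Real.rpow_pos_of_pos hα0 _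
    have hαp : (0:ℝ) < α ^ (ν/2 + 1/2 : ℝ) := Real.rpow_pos_of_pos hα0 _
    have hαm : (0:ℝ) < (α ^ m : ℝ) := pow_pos hα0 m
    simp only [hcdef, hCbigdef, hudef]
    rw [hg1, hg2, he1, he4, he7, hew, he5, hPA m, hPb m]
    field_simp
  -- Summability of the hypergeometric series
  have husum : Summable u := by
    apply Summable.of_nonneg_of_le _ _ (Real.summable_pow_div_factorial ((A+1) * w))
    · intro m
      simp only [hudef]
      rw [hPA m, hPb m]
      have h1 : 0 ≤ ∏ i ∈ Finset.range m, (A + (i : ℝ)) := by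
        refine Finset.prod_nonneg fun i _ => ?_
        have : (0:ℝ) ≤ (i : ℝ) := Nat.cast_nonneg i
        linarith
      exact div_nonneg (mul_nonneg (div_nonneg h1 (hprodb m).le) (pow_nonneg hw0 m))
        (Nat.cast_nonneg _)
    · intro m
      simp only [hudef]
      rw [hPA m, hPb m, mul_pow]
      have hPA_le : (∏ i ∈ Finset.range m, (A + (i : ℝ)))
          ≤ (A+1)^m * ∏ i ∈ Finset.range m, (ν + 1 + (i : ℝ)) := by
        calc (∏ i ∈ Finset.range m, (A + (i : ℝ)))
            ≤ ∏ i ∈ Finset.range m, ((A+1) * (ν + 1 + (i : ℝ))) := by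
              refine Finset.prod_le_prod (fun i _ => ?_) (fun i _ => ?_)
              · have : (0:ℝ) ≤ (i : ℝ) := Nat.cast_nonneg i
                linarith
              · have hi : (0:ℝ) ≤ (i : ℝ) := Nat.cast_nonneg i
                nlinarith
          _ = (A+1)^m * ∏ i ∈ Finset.range m, (ν + 1 + (i : ℝ)) := by
              rw [Finset.prod_mul_distrib, Finset.prod_const, Finset.card_range]
      have h5 : (∏ i ∈ Finset.range m, (A + (i : ℝ)))
          / (∏ i ∈ Finset.range m, (ν + 1 + (i : ℝ))) ≤ (A+1)^m :=
        (div_le_iff₀ (hprodb m)).2 hPA_le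
      have hfac : (0:ℝ) < (Nat.factorial m : ℝ) := by
        exact_mod_cast Nat.factorial_pos m
      exact div_le_div_of_nonneg_right (mul_le_mul_of_nonneg_right h5 (pow_nonneg hw0 m)) hfac.le
  -- Summability of the integrals of norms
  have hNorm : Summable (fun m : ℕ => ∫ y in Set.Ioi (0:ℝ), ‖f m y‖) := by
    have hnormint : ∀ m : ℕ, (∫ y in Set.Ioi (0:ℝ), ‖f m y‖)
        = c m * ((1 / α) ^ (A + (m:ℝ)) * Real.Gamma (A + (m:ℝ))) := by
      intro m
      rw [← hInt m]
      refine setIntegral_congr_fun measurableSet_Ioi fun y hy => ?_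
      rw [Set.mem_Ioi] at hy
      simp only [hfdef]
      refine Real.norm_of_nonneg (mul_nonneg (hc0 m) (mul_nonneg (Real.rpow_nonneg hy.le _)
        (Real.exp_pos _).le))
    refine Summable.congr (husum.mul_left Cbig) fun m => ?_
    rw [← htu m, hnormint m]
  -- Final assembly
  calc (∫ y in Set.Ioi (0:ℝ), Real.exp (-lam * y) * p y)
      = ∫ y in Set.Ioi (0:ℝ), ∑' m : ℕ, f m y := setIntegral_congr_fun measurableSet_Ioi stepA
    _ = ∑' m : ℕ, ∫ y in Set.Ioi (0:ℝ), f m y :=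
        (integral_tsum_of_summable_integral_norm hIntg hNorm).symm
    _ = ∑' m : ℕ, (Cbig * u m) := tsum_congr (fun m => (hInt m).trans (htu m))
    _ = Cbig * ∑' m : ℕ, u m := tsum_mul_left
    _ = _ := by
        simp only [hCbigdef, hudef, whittakerM, hyp1F1]
        ring
end

section
/- Let σ > 0, μ > 0, ν > 0, A > 0, and B, C be real with σ² + 2C > 0, and set β = √(σ² + 2C)/σ; assume β is not an integer. Let f : (0,∞) → ℝ be differentiable and satisfy the Riccati equation σ x f'(x) − σ f(x) + (1/2) f(x)² + 2σν + 2σμ x² = (1/2) A x² + B x + C for all x > 0, and let F : (0,∞) → ℝ be differentiable with F'(x) = f(x)/x. Fix y > 0 and real constants C₁, C₂, and define for t > 0, x > 0: p(t,x,y) = ( √(Axy) / (2σ sinh(√A t/2)) ) exp( −( Bt + √A (x+y) coth(√A t/2) + F(x) − F(y) )/(2σ) ) · ( C₁ I_β( √(Axy)/(σ sinh(√A t/2)) ) + C₂ I_{−β}( √(Axy)/(σ sinh(√A t/2)) ) ). Then for all t > 0 and x > 0, ∂_t p = σ x ∂²_x p + f(x) ∂_x p − ( ν/x + μ x ) p.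 -/
open Real MeasureTheory

/-- Auxiliary entire-series part of the Bessel function. -/
noncomputable def bg (ν w : ℝ) : ℝ :=
  ∑' k : ℕ, w ^ k / ((Nat.factorial k : ℝ) * Real.Gamma ((k : ℝ) + ν + 1))

lemma gamma_arg_ne_zero {ν : ℝ} (hν : ∀ n : ℤ, ν ≠ (n : ℝ)) (a : ℤ) : ν + (a : ℝ) ≠ 0 := by
  intro h
  exact hν (-a) (by push_cast; linarith)

lemma gamma_ne_zero' {ν : ℝ} (hν : ∀ n : ℤ, ν ≠ (n : ℝ)) (k : ℕ) :
    Real.Gamma ((k : ℝ) + ν + 1) ≠ 0 := by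
  apply Real.Gamma_ne_zero
  intro m h
  exact hν (-(m : ℤ) - (k : ℤ) - 1) (by push_cast; linarith)

lemma summable_gamma_aux (ν : ℝ) (hν : ∀ n : ℤ, ν ≠ (n : ℝ)) (b : ℕ → ℝ) (Q : ℝ)
    (hQ : 0 ≤ Q) (hb : ∀ k : ℕ, 1 ≤ k → |b (k + 1)| ≤ Q * |b k|) :
    Summable (fun k : ℕ => b k / ((Nat.factorial k : ℝ) * |Real.Gamma ((k : ℝ) + ν + 1)|)) := by
  apply summable_of_ratio_norm_eventually_le (r := 1/2) (by norm_num)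
  rw [Filter.eventually_atTop]
  refine ⟨max 1 (max ⌈|ν|⌉₊ ⌈2*Q⌉₊), fun k hk => ?_⟩
  have hk1 : 1 ≤ k := le_trans (le_max_left _ _) hk
  have hkν : |ν| ≤ (k : ℝ) := by
    calc |ν| ≤ (⌈|ν|⌉₊ : ℝ) := Nat.le_ceil _
    _ ≤ (k : ℝ) := by exact_mod_cast le_trans (le_max_left _ _) (le_trans (le_max_right _ _) hk)
  have hkQ : 2*Q ≤ (k : ℝ) := by
    calc 2*Q ≤ (⌈2*Q⌉₊ : ℝ) := Nat.le_ceil _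
    _ ≤ (k : ℝ) := by exact_mod_cast le_trans (le_max_right _ _) (le_trans (le_max_right _ _) hk)
  have hν1 : (1 : ℝ) ≤ (k : ℝ) + ν + 1 := by
    have := abs_le.1 (le_refl |ν|) |>.1
    have := neg_abs_le ν
    linarith
  have hΓ : Real.Gamma ((k : ℝ) + ν + 1) ≠ 0 := gamma_ne_zero' hν k
  have hrec0 : Real.Gamma (((k+1 : ℕ) : ℝ) + ν + 1) = ((k : ℝ) + ν + 1) * Real.Gamma ((k : ℝ) + ν + 1) := by
    have : (((k+1 : ℕ) : ℝ)) + ν + 1 = ((k : ℝ) + ν + 1) + 1 := by push_cast; ring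
    rw [this, Real.Gamma_add_one (by linarith)]
  have hrec : |Real.Gamma (((k+1 : ℕ) : ℝ) + ν + 1)| = ((k : ℝ) + ν + 1) * |Real.Gamma ((k : ℝ) + ν + 1)| := by
    rw [hrec0, abs_mul, abs_of_pos (show (0:ℝ) < (k : ℝ) + ν + 1 by linarith)]
  have hfac : ((Nat.factorial (k+1) : ℝ)) = ((k : ℝ) + 1) * (Nat.factorial k : ℝ) := by
    rw [Nat.factorial_succ]; push_cast; ring
  simp only [norm_div, Real.norm_eq_abs, hrec, hfac]
  have hfpos : (0 : ℝ) < (Nat.factorial k : ℝ) := by positivity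
  have hΓpos : (0 : ℝ) < |Real.Gamma ((k : ℝ) + ν + 1)| := abs_pos.2 hΓ
  have h1 : |((k : ℝ) + 1)| = (k : ℝ) + 1 := abs_of_pos (by positivity)
  have h2 : |((k : ℝ) + ν + 1)| = (k : ℝ) + ν + 1 := abs_of_pos (by linarith)
  have h3 : |(Nat.factorial k : ℝ)| = (Nat.factorial k : ℝ) := abs_of_pos hfpos
  simp only [abs_mul, abs_abs, h1, h2, h3]
  rw [show (1:ℝ)/2 * (|b k| / ((Nat.factorial k : ℝ) * |Real.Gamma ((k:ℝ)+ν+1)|))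
      = |b k| / (2 * ((Nat.factorial k : ℝ) * |Real.Gamma ((k:ℝ)+ν+1)|)) from by ring]
  rw [div_le_div_iff₀ (by positivity) (by positivity)]
  have hbk := hb k hk1
  have key : |b (k+1)| * 2 ≤ ((k : ℝ) + 1) * (((k : ℝ) + ν + 1)) * |b k| := by
    have h2Q : 2 * Q ≤ ((k : ℝ) + 1) * ((k : ℝ) + ν + 1) := by nlinarith
    nlinarith [abs_nonneg (b k), abs_nonneg (b (k+1))]
  have hfg : (0:ℝ) ≤ (Nat.factorial k : ℝ) * |Real.Gamma ((k : ℝ) + ν + 1)| := by positivity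
  nlinarith [mul_le_mul_of_nonneg_right key hfg]

lemma nonint_add_one {ν : ℝ} (hν : ∀ n : ℤ, ν ≠ (n : ℝ)) : ∀ n : ℤ, ν + 1 ≠ (n : ℝ) := by
  intro n h
  exact hν (n - 1) (by push_cast; linarith)

lemma summable_kR (ν : ℝ) (hν : ∀ n : ℤ, ν ≠ (n : ℝ)) (R : ℝ) (hR : 0 ≤ R) :
    Summable (fun k : ℕ => (k : ℝ) * R ^ k / ((Nat.factorial k : ℝ) * |Real.Gamma ((k : ℝ) + ν + 1)|)) := by
  apply summable_gamma_aux ν hν _ (2 * R) (by linarith)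
  intro k hk
  have hk1 : (1 : ℝ) ≤ (k : ℝ) := by exact_mod_cast hk
  have h1 : |((k : ℝ) + 1) * R ^ (k + 1)| = ((k : ℝ) + 1) * R ^ (k + 1) := by
    apply abs_of_nonneg; positivity
  have h2 : |(k : ℝ) * R ^ k| = (k : ℝ) * R ^ k := by apply abs_of_nonneg; positivity
  push_cast
  rw [h1, h2, pow_succ]
  have h3 : ((k:ℝ)+1) * (R^k*R) ≤ (2*(k:ℝ)) * (R^k*R) :=
    mul_le_mul_of_nonneg_right (by linarith) (by positivity)
  exact h3.trans_eq (by ring)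

lemma summable_bg_abs (ν : ℝ) (hν : ∀ n : ℤ, ν ≠ (n : ℝ)) (w : ℝ) :
    Summable (fun k : ℕ => |w| ^ k / ((Nat.factorial k : ℝ) * |Real.Gamma ((k : ℝ) + ν + 1)|)) := by
  apply summable_gamma_aux ν hν _ |w| (abs_nonneg w)
  intro k _
  rw [abs_of_nonneg (pow_nonneg (abs_nonneg w) (k+1)),
    abs_of_nonneg (pow_nonneg (abs_nonneg w) k), pow_succ, mul_comm]

lemma summable_bg (ν : ℝ) (hν : ∀ n : ℤ, ν ≠ (n : ℝ)) (w : ℝ) :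
    Summable (fun k : ℕ => w ^ k / ((Nat.factorial k : ℝ) * Real.Gamma ((k : ℝ) + ν + 1))) := by
  apply Summable.of_abs
  have : (fun k : ℕ => |w ^ k / ((Nat.factorial k : ℝ) * Real.Gamma ((k : ℝ) + ν + 1))|)
      = fun k : ℕ => |w| ^ k / ((Nat.factorial k : ℝ) * |Real.Gamma ((k : ℝ) + ν + 1)|) := by
    funext k
    rw [abs_div, abs_mul, abs_pow, Nat.abs_cast]
  rw [this]
  exact summable_bg_abs ν hν w

lemma hasDerivAt_bg (ν : ℝ) (hν : ∀ n : ℤ, ν ≠ (n : ℝ)) (w : ℝ) :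
    HasDerivAt (fun u => bg ν u) (bg (ν + 1) w) w := by
  set R := |w| + 1 with hRdef
  have hR0 : (0 : ℝ) ≤ R := by positivity
  have hR1 : (1 : ℝ) ≤ R := by rw [hRdef]; nlinarith [abs_nonneg w]
  have hw : w ∈ Set.Ioo (-R) R :=
    ⟨by simp only [hRdef]; nlinarith [neg_abs_le w], by simp only [hRdef]; nlinarith [le_abs_self w]⟩
  have hbound : ∀ (k : ℕ) (u : ℝ), u ∈ Set.Ioo (-R) R →
      ‖(k : ℝ) * u ^ (k - 1) / ((Nat.factorial k : ℝ) * Real.Gamma ((k : ℝ) + ν + 1))‖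
        ≤ (k : ℝ) * R ^ k / ((Nat.factorial k : ℝ) * |Real.Gamma ((k : ℝ) + ν + 1)|) := by
    intro k u hu
    have huR : |u| ≤ R := by
      rw [abs_le]; exact ⟨hu.1.le, hu.2.le⟩
    rw [Real.norm_eq_abs, abs_div, abs_mul, abs_mul, Nat.abs_cast, Nat.abs_cast, abs_pow]
    have hΓpos : (0:ℝ) < |Real.Gamma ((k : ℝ) + ν + 1)| := abs_pos.2 (gamma_ne_zero' hν k)
    have hle : |u| ^ (k - 1) ≤ R ^ k :=
      le_trans (pow_le_pow_left₀ (abs_nonneg u) huR _) (pow_le_pow_right₀ hR1 (Nat.sub_le k 1))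
    gcongr
  have hg0 : Summable (fun k : ℕ => (0:ℝ) ^ k / ((Nat.factorial k : ℝ) * Real.Gamma ((k : ℝ) + ν + 1))) := by
    apply summable_of_ne_finset_zero (s := {0})
    intro k hk
    simp only [Finset.mem_singleton] at hk
    rw [zero_pow hk, zero_div]
  have key := hasDerivAt_tsum_of_isPreconnected
    (u := fun k : ℕ => (k : ℝ) * R ^ k / ((Nat.factorial k : ℝ) * |Real.Gamma ((k : ℝ) + ν + 1)|))
    (g := fun (k : ℕ) (u : ℝ) => u ^ k / ((Nat.factorial k : ℝ) * Real.Gamma ((k : ℝ) + ν + 1)))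
    (g' := fun (k : ℕ) (u : ℝ) => (k : ℝ) * u ^ (k - 1) / ((Nat.factorial k : ℝ) * Real.Gamma ((k : ℝ) + ν + 1)))
    (summable_kR ν hν R hR0) isOpen_Ioo (convex_Ioo (-R) R).isPreconnected
    (fun k u _ => (hasDerivAt_pow k u).div_const _)
    hbound (Set.mem_Ioo.2 ⟨by linarith, by linarith⟩) hg0 hw
  have hsum : Summable (fun k : ℕ => (k : ℝ) * w ^ (k - 1) / ((Nat.factorial k : ℝ) * Real.Gamma ((k : ℝ) + ν + 1))) :=
    Summable.of_norm_bounded (summable_kR ν hν R hR0) (fun k => hbound k w hw)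
  have heq : (∑' k : ℕ, (k : ℝ) * w ^ (k - 1) / ((Nat.factorial k : ℝ) * Real.Gamma ((k : ℝ) + ν + 1)))
      = bg (ν + 1) w := by
    rw [Summable.tsum_eq_zero_add hsum]
    simp only [Nat.cast_zero, zero_mul, zero_div, zero_add]
    unfold bg
    apply tsum_congr
    intro k
    have harg : ((k + 1 : ℕ) : ℝ) + ν + 1 = ((k : ℝ) + (ν + 1) + 1) := by push_cast; ring
    have hk1 : ((k : ℝ) + 1) ≠ 0 := by positivity
    have hΓ : Real.Gamma ((k : ℝ) + (ν + 1) + 1) ≠ 0 := gamma_ne_zero' (nonint_add_one hν) k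
    rw [harg, Nat.add_sub_cancel, Nat.factorial_succ]
    push_cast
    field_simp
  rw [← heq]
  exact key

lemma bg_rec (ν : ℝ) (hν : ∀ n : ℤ, ν ≠ (n : ℝ)) (w : ℝ) :
    bg ν w = (ν + 1) * bg (ν + 1) w + w * bg (ν + 2) w := by
  have hν1 := nonint_add_one hν
  have hν2'' := nonint_add_one hν1
  have hν2 : ∀ n : ℤ, ν + 2 ≠ (n : ℝ) := by
    intro n h
    exact hν2'' n (by linarith)
  have hane : ∀ k : ℕ, (k : ℝ) + ν + 1 ≠ 0 := by
    intro k h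
    exact hν (-(k : ℤ) - 1) (by push_cast; linarith)
  have hΓ : ∀ k : ℕ, Real.Gamma ((k : ℝ) + ν + 1) ≠ 0 := gamma_ne_zero' hν
  have hΓ1 : ∀ k : ℕ, Real.Gamma ((k : ℝ) + (ν + 1) + 1) ≠ 0 := gamma_ne_zero' hν1
  -- step 1 : bg ν w - (ν+1) * bg (ν+1) w = ∑' k, k * w^k / (k! * Γ(k+ν+2))
  have hrec : ∀ k : ℕ, Real.Gamma ((k : ℝ) + (ν + 1) + 1) = ((k : ℝ) + ν + 1) * Real.Gamma ((k : ℝ) + ν + 1) := by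
    intro k
    have : (k : ℝ) + (ν + 1) + 1 = ((k : ℝ) + ν + 1) + 1 := by ring
    rw [this, Real.Gamma_add_one (hane k)]
  have hsummid : Summable (fun k : ℕ => (k : ℝ) * w ^ k / ((Nat.factorial k : ℝ) * Real.Gamma ((k : ℝ) + (ν + 1) + 1))) := by
    apply Summable.of_abs
    have : (fun k : ℕ => |(k : ℝ) * w ^ k / ((Nat.factorial k : ℝ) * Real.Gamma ((k : ℝ) + (ν + 1) + 1))|)
        = fun k : ℕ => (k : ℝ) * |w| ^ k / ((Nat.factorial k : ℝ) * |Real.Gamma ((k : ℝ) + (ν + 1) + 1)|) := by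
      funext k
      rw [abs_div, abs_mul, abs_mul, abs_pow, Nat.abs_cast, Nat.abs_cast]
    rw [this]
    exact summable_kR (ν + 1) hν1 |w| (abs_nonneg w)
  have step1 : bg ν w - (ν + 1) * bg (ν + 1) w
      = ∑' k : ℕ, (k : ℝ) * w ^ k / ((Nat.factorial k : ℝ) * Real.Gamma ((k : ℝ) + (ν + 1) + 1)) := by
    unfold bg
    rw [← tsum_mul_left, ← Summable.tsum_sub (summable_bg ν hν w) ((summable_bg (ν + 1) hν1 w).mul_left _)]
    apply tsum_congr
    intro k
    rw [hrec k]
    have h1 := hΓ k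
    have h2 := hane k
    have h3 : (Nat.factorial k : ℝ) ≠ 0 := by positivity
    field_simp
    ring
  -- step 2 : shift index
  have step2 : (∑' k : ℕ, (k : ℝ) * w ^ k / ((Nat.factorial k : ℝ) * Real.Gamma ((k : ℝ) + (ν + 1) + 1)))
      = w * bg (ν + 2) w := by
    rw [Summable.tsum_eq_zero_add hsummid]
    simp only [Nat.cast_zero, zero_mul, zero_div, zero_add]
    unfold bg
    rw [← tsum_mul_left]
    apply tsum_congr
    intro k
    have harg : ((k + 1 : ℕ) : ℝ) + (ν + 1) + 1 = ((k : ℝ) + (ν + 2) + 1) := by push_cast; ring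
    have hΓ2 : Real.Gamma ((k : ℝ) + (ν + 2) + 1) ≠ 0 := gamma_ne_zero' hν2 k
    have hk1 : ((k : ℝ) + 1) ≠ 0 := by positivity
    rw [harg, Nat.factorial_succ]
    push_cast
    field_simp
    ring
  linarith [step1, step2]


noncomputable def bI' (ν z : ℝ) : ℝ :=
  ν/2 * (z/2) ^ (ν-1) * bg ν ((z/2)^2) + (z/2) ^ (ν+1) * bg (ν+1) ((z/2)^2)

noncomputable def bI'' (ν z : ℝ) : ℝ :=
  ν*(ν-1)/4 * (z/2) ^ (ν-2) * bg ν ((z/2)^2) + (2*ν+1)/2 * (z/2) ^ ν * bg (ν+1) ((z/2)^2)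
    + (z/2) ^ (ν+2) * bg (ν+2) ((z/2)^2)

lemma besselI_eq_bg (ν : ℝ) {z : ℝ} (hz : 0 < z) :
    besselI ν z = (z/2) ^ ν * bg ν ((z/2)^2) := by
  have h2 : (0:ℝ) < z/2 := by linarith
  unfold besselI bg
  rw [← tsum_mul_left]
  apply tsum_congr
  intro k
  have hexp : (z/2) ^ (2*(k:ℝ)+ν) = ((z/2)^2)^k * (z/2)^ν := by
    rw [show 2*(k:ℝ)+ν = ((2*k : ℕ) : ℝ) + ν by push_cast; ring, Real.rpow_add h2,
      Real.rpow_natCast, pow_mul]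
  rw [hexp]
  ring

lemma hasDerivAt_besselI (ν : ℝ) (hν : ∀ n : ℤ, ν ≠ (n : ℝ)) {z : ℝ} (hz : 0 < z) :
    HasDerivAt (besselI ν) (bI' ν z) z := by
  have h2 : (0:ℝ) < z/2 := by linarith
  have hne : z/2 ≠ 0 := ne_of_gt h2
  have Hlin : HasDerivAt (fun u : ℝ => u/2) (1/2) z := by
    simpa using (hasDerivAt_id z).div_const 2
  have H1 : HasDerivAt (fun u : ℝ => (u/2) ^ ν) (ν * (z/2) ^ (ν-1) * (1/2)) z :=
    HasDerivAt.comp z (h₂ := fun w => w ^ ν) (Real.hasDerivAt_rpow_const (Or.inl hne)) Hlin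
  have Hsq : HasDerivAt (fun u : ℝ => (u/2)^2) ((2:ℕ) * (z/2)^1 * (1/2)) z :=
    HasDerivAt.comp z (h₂ := fun w => w ^ 2) (hasDerivAt_pow 2 (z/2)) Hlin
  have Hbg : HasDerivAt (fun u : ℝ => bg ν ((u/2)^2))
      (bg (ν+1) ((z/2)^2) * ((2:ℕ) * (z/2)^1 * (1/2))) z :=
    HasDerivAt.comp z (h₂ := fun w => bg ν w) (hasDerivAt_bg ν hν ((z/2)^2)) Hsq
  have H := H1.mul Hbg
  have Heq : HasDerivAt (fun u : ℝ => (u/2) ^ ν * bg ν ((u/2)^2)) (bI' ν z) z := by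
    refine H.congr_deriv ?_
    unfold bI'
    rw [show (z/2) ^ (ν+1) = (z/2) ^ ν * (z/2) from by rw [Real.rpow_add_one hne]]
    push_cast
    ring
  apply Heq.congr_of_eventuallyEq
  filter_upwards [Ioi_mem_nhds hz] with u hu
  exact besselI_eq_bg ν hu

lemma hasDerivAt_bI' (ν : ℝ) (hν : ∀ n : ℤ, ν ≠ (n : ℝ)) {z : ℝ} (hz : 0 < z) :
    HasDerivAt (bI' ν) (bI'' ν z) z := by
  have hν1 := nonint_add_one hν
  have h2 : (0:ℝ) < z/2 := by linarith
  have hne : z/2 ≠ 0 := ne_of_gt h2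
  have Hlin : HasDerivAt (fun u : ℝ => u/2) (1/2) z := by
    simpa using (hasDerivAt_id z).div_const 2
  have Hsq : HasDerivAt (fun u : ℝ => (u/2)^2) ((2:ℕ) * (z/2)^1 * (1/2)) z :=
    HasDerivAt.comp z (h₂ := fun w => w ^ 2) (hasDerivAt_pow 2 (z/2)) Hlin
  have Hr1 : HasDerivAt (fun u : ℝ => (u/2) ^ (ν-1)) ((ν-1) * (z/2) ^ (ν-1-1) * (1/2)) z :=
    HasDerivAt.comp z (h₂ := fun w => w ^ (ν-1)) (Real.hasDerivAt_rpow_const (Or.inl hne)) Hlin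
  have Hr2 : HasDerivAt (fun u : ℝ => (u/2) ^ (ν+1)) ((ν+1) * (z/2) ^ (ν+1-1) * (1/2)) z :=
    HasDerivAt.comp z (h₂ := fun w => w ^ (ν+1)) (Real.hasDerivAt_rpow_const (Or.inl hne)) Hlin
  have Hbg0 : HasDerivAt (fun u : ℝ => bg ν ((u/2)^2))
      (bg (ν+1) ((z/2)^2) * ((2:ℕ) * (z/2)^1 * (1/2))) z :=
    HasDerivAt.comp z (h₂ := fun w => bg ν w) (hasDerivAt_bg ν hν ((z/2)^2)) Hsq
  have Hbg1 : HasDerivAt (fun u : ℝ => bg (ν+1) ((u/2)^2))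
      (bg (ν+1+1) ((z/2)^2) * ((2:ℕ) * (z/2)^1 * (1/2))) z :=
    HasDerivAt.comp z (h₂ := fun w => bg (ν+1) w) (hasDerivAt_bg (ν+1) hν1 ((z/2)^2)) Hsq
  have H := ((Hr1.mul Hbg0).const_mul (ν/2)).add (Hr2.mul Hbg1)
  have hgoal : HasDerivAt (fun u : ℝ =>
      ν/2 * ((u/2) ^ (ν-1) * bg ν ((u/2)^2)) + (u/2) ^ (ν+1) * bg (ν+1) ((u/2)^2))
      (bI'' ν z) z := by
    refine H.congr_deriv ?_
    unfold bI''
    have e0 : (z/2) ^ (ν-1-1) = (z/2) ^ (ν-2) := by rw [show ν-1-1 = ν-2 from by ring]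
    have e1 : (z/2) ^ (ν-1) * (z/2) = (z/2) ^ ν := by
      rw [← Real.rpow_add_one hne]; norm_num
    have e2 : (z/2) ^ (ν+1-1) = (z/2) ^ ν := by norm_num
    have e3 : (z/2) ^ (ν+1) * (z/2) = (z/2) ^ (ν+2) := by
      rw [← Real.rpow_add_one hne]; ring_nf
    have e4 : ν+1+1 = ν+2 := by ring
    rw [e0, e2, e4]
    push_cast
    rw [← e1, ← e3]
    ring
  apply hgoal.congr_of_eventuallyEq
  apply Filter.Eventually.of_forall
  intro u
  unfold bI'
  ring

lemma besselI_ode (ν : ℝ) (hν : ∀ n : ℤ, ν ≠ (n : ℝ)) {z : ℝ} (hz : 0 < z) :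
    z^2 * bI'' ν z + z * bI' ν z = (z^2 + ν^2) * besselI ν z := by
  have h2 : (0:ℝ) < z/2 := by linarith
  have hne : z/2 ≠ 0 := ne_of_gt h2
  rw [besselI_eq_bg ν hz]
  unfold bI' bI''
  have e1 : (z/2) ^ (ν-1) = (z/2) ^ (ν-2) * (z/2) := by
    rw [← Real.rpow_add_one hne, show ν-2+1 = ν-1 from by ring]
  have e2 : (z/2) ^ ν = (z/2) ^ (ν-2) * (z/2)^2 := by
    rw [← Real.rpow_natCast (z/2) 2, ← Real.rpow_add h2]; norm_num
  have e3 : (z/2) ^ (ν+1) = (z/2) ^ (ν-2) * (z/2)^3 := by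
    rw [← Real.rpow_natCast (z/2) 3, ← Real.rpow_add h2, show ν-2+(3:ℕ) = ν+1 from by push_cast; ring]
  have e4 : (z/2) ^ (ν+2) = (z/2) ^ (ν-2) * (z/2)^4 := by
    rw [← Real.rpow_natCast (z/2) 4, ← Real.rpow_add h2, show ν-2+(4:ℕ) = ν+2 from by push_cast; ring]
  rw [e1, e2, e3, e4]
  have hrec := bg_rec ν hν ((z/2)^2)
  linear_combination (-4*((z/2) ^ (ν-2))*(z/2)^4) * hrec


set_option maxHeartbeats 2000000 in
/-- The fundamental solution formula of Theorem 5.10 for the PDE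
`u_t = σ x u_xx + f(x) u_x - (ν/x + μx) u` when the drift `f` solves the Riccati
equation `σ x f' - σ f + f²/2 + 2σν + 2σμx² = (1/2)Ax² + Bx + C` with `A > 0`. -/
theorem stmt_18 (σ μ ν A B C β : ℝ) (hσ : 0 < σ) (hμ : 0 < μ) (hν : 0 < ν) (hA : 0 < A)
    (hC : 0 < σ ^ 2 + 2 * C)
    (hβ : β = Real.sqrt (σ ^ 2 + 2 * C) / σ) (hβint : ∀ n : ℤ, β ≠ (n : ℝ))
    (f F : ℝ → ℝ)
    (hf : ∀ x > (0 : ℝ), DifferentiableAt ℝ f x)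
    (hRic : ∀ x > (0 : ℝ),
      σ * x * deriv f x - σ * f x + (1 / 2) * (f x) ^ 2 + 2 * σ * ν + 2 * σ * μ * x ^ 2
        = (1 / 2) * A * x ^ 2 + B * x + C)
    (hF : ∀ x > (0 : ℝ), HasDerivAt F (f x / x) x)
    (y : ℝ) (hy : 0 < y) (C₁ C₂ : ℝ)
    (p : ℝ → ℝ → ℝ)
    (hp : ∀ t x, p t x =
      (Real.sqrt (A * x * y) / (2 * σ * Real.sinh (Real.sqrt A * t / 2)))
        * Real.exp (-(B * t
            + Real.sqrt A * (x + y)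
                * (Real.cosh (Real.sqrt A * t / 2) / Real.sinh (Real.sqrt A * t / 2))
            + F x - F y) / (2 * σ))
        * (C₁ * besselI β (Real.sqrt (A * x * y) / (σ * Real.sinh (Real.sqrt A * t / 2)))
          + C₂ * besselI (-β)
              (Real.sqrt (A * x * y) / (σ * Real.sinh (Real.sqrt A * t / 2))))) :
    ∀ t > (0 : ℝ), ∀ x > (0 : ℝ),
      deriv (fun τ => p τ x) t
        = σ * x * deriv (deriv (fun ξ => p t ξ)) x
          + f x * deriv (fun ξ => p t ξ) x - (ν / x + μ * x) * p t x := by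
  intro t ht x hx
  have hσ' : σ ≠ 0 := ne_of_gt hσ
  have hs : 0 < Real.sqrt A := Real.sqrt_pos.2 hA
  have hAy : 0 < A * y := by positivity
  have hxne : x ≠ 0 := ne_of_gt hx
  have hβneg : ∀ n : ℤ, -β ≠ (n : ℝ) := by
    intro n h
    exact hβint (-n) (by push_cast at h ⊢; linarith)
  have hθ : 0 < Real.sqrt A * t / 2 := by positivity
  have hsh : 0 < Real.sinh (Real.sqrt A * t / 2) := Real.sinh_pos_iff.2 hθ
  have hshne : Real.sinh (Real.sqrt A * t / 2) ≠ 0 := ne_of_gt hsh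
  have hK : 0 < Real.sqrt (A * y) := Real.sqrt_pos.2 hAy
  have hsqrtA : ∀ u : ℝ, Real.sqrt (A * u * y) = Real.sqrt (A * y) * Real.sqrt u := by
    intro u
    rw [show A * u * y = (A * y) * u from by ring, Real.sqrt_mul (le_of_lt hAy)]
  have hrx : 0 < Real.sqrt x := Real.sqrt_pos.2 hx
  -- time derivative
  have hφt : (fun τ => p τ x) = (fun τ =>
      Real.sqrt (A * y) * Real.sqrt x / (2 * σ * Real.sinh (Real.sqrt A * τ / 2))
        * Real.exp (-(B * τ
            + Real.sqrt A * (x + y)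
                * (Real.cosh (Real.sqrt A * τ / 2) / Real.sinh (Real.sqrt A * τ / 2))
            + F x - F y) / (2 * σ))
        * (C₁ * besselI β (Real.sqrt (A * y) * Real.sqrt x / (σ * Real.sinh (Real.sqrt A * τ / 2)))
          + C₂ * besselI (-β)
              (Real.sqrt (A * y) * Real.sqrt x / (σ * Real.sinh (Real.sqrt A * τ / 2))))) := by
    funext τ
    rw [hp τ x, hsqrtA x]
  have hlin : HasDerivAt (fun τ : ℝ => Real.sqrt A * τ / 2) (Real.sqrt A * 1 / 2) t :=
    ((hasDerivAt_id t).const_mul (Real.sqrt A)).div_const 2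
  have hshd : HasDerivAt (fun τ => Real.sinh (Real.sqrt A * τ / 2))
      (Real.cosh (Real.sqrt A * t / 2) * (Real.sqrt A * 1 / 2)) t := hlin.sinh
  have hchd : HasDerivAt (fun τ => Real.cosh (Real.sqrt A * τ / 2))
      (Real.sinh (Real.sqrt A * t / 2) * (Real.sqrt A * 1 / 2)) t := hlin.cosh
  have hq1 := (hasDerivAt_const t (Real.sqrt (A * y) * Real.sqrt x)).div (hshd.const_mul (2 * σ))
      (by positivity)
  have hcoth := hchd.div hshd hshne
  have hinner := (((((hasDerivAt_id t).const_mul B).add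
      (hcoth.const_mul (Real.sqrt A * (x + y)))).add_const (F x)).sub_const (F y)).neg.div_const (2 * σ)
  have hq2 := hinner.exp
  have hargt := (hasDerivAt_const t (Real.sqrt (A * y) * Real.sqrt x)).div (hshd.const_mul σ)
      (by positivity)
  have hzpos : 0 < Real.sqrt (A * y) * Real.sqrt x / (σ * Real.sinh (Real.sqrt A * t / 2)) := by positivity
  have hq3 := (((hasDerivAt_besselI β hβint hzpos).comp t hargt).const_mul C₁).add
    (((hasDerivAt_besselI (-β) hβneg hzpos).comp t hargt).const_mul C₂)
  have Ht : HasDerivAt (fun τ =>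
      Real.sqrt (A * y) * Real.sqrt x / (2 * σ * Real.sinh (Real.sqrt A * τ / 2))
        * Real.exp (-(B * τ
            + Real.sqrt A * (x + y)
                * (Real.cosh (Real.sqrt A * τ / 2) / Real.sinh (Real.sqrt A * τ / 2))
            + F x - F y) / (2 * σ))
        * (C₁ * besselI β (Real.sqrt (A * y) * Real.sqrt x / (σ * Real.sinh (Real.sqrt A * τ / 2)))
          + C₂ * besselI (-β)
              (Real.sqrt (A * y) * Real.sqrt x / (σ * Real.sinh (Real.sqrt A * τ / 2))))) _ t :=
    (hq1.mul hq2).mul hq3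
  rw [hφt, Ht.deriv]
  -- space derivatives
  have hX1 : ∀ ξ : ℝ, 0 < ξ → HasDerivAt (fun ξ' => p t ξ')
      (Real.exp (-(B * t + Real.sqrt A * (ξ + y) * (Real.cosh (Real.sqrt A * t / 2) / Real.sinh (Real.sqrt A * t / 2)) + F ξ - F y) / (2 * σ)) * (Real.sqrt (A * y) / (4 * σ * Real.sinh (Real.sqrt A * t / 2) * Real.sqrt ξ) * (C₁ * besselI β (Real.sqrt (A * y) * Real.sqrt ξ / (σ * Real.sinh (Real.sqrt A * t / 2))) + C₂ * besselI (-β) (Real.sqrt (A * y) * Real.sqrt ξ / (σ * Real.sinh (Real.sqrt A * t / 2)))) + Real.sqrt (A * y) * Real.sqrt ξ / (2 * σ * Real.sinh (Real.sqrt A * t / 2)) * (-(Real.sqrt A * (Real.cosh (Real.sqrt A * t / 2) / Real.sinh (Real.sqrt A * t / 2)) + f ξ / ξ) / (2 * σ)) * (C₁ * besselI β (Real.sqrt (A * y) * Real.sqrt ξ / (σ * Real.sinh (Real.sqrt A * t / 2))) + C₂ * besselI (-β) (Real.sqrt (A * y) * Real.sqrt ξ / (σ * Real.sinh (Real.sqrt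 A * t / 2)))) + Real.sqrt (A * y) * Real.sqrt ξ / (2 * σ * Real.sinh (Real.sqrt A * t / 2)) * (C₁ * bI' β (Real.sqrt (A * y) * Real.sqrt ξ / (σ * Real.sinh (Real.sqrt A * t / 2))) + C₂ * bI' (-β) (Real.sqrt (A * y) * Real.sqrt ξ / (σ * Real.sinh (Real.sqrt A * t / 2)))) * (Real.sqrt (A * y) / (2 * σ * Real.sinh (Real.sqrt A * t / 2) * Real.sqrt ξ)))) ξ := by
    intro ξ hξ
    have hξne : ξ ≠ 0 := ne_of_gt hξ
    have hrξ : 0 < Real.sqrt ξ := Real.sqrt_pos.2 hξ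
    have hφx : (fun ξ' => p t ξ') = (fun ξ' =>
        Real.sqrt (A * y) * Real.sqrt ξ' / (2 * σ * Real.sinh (Real.sqrt A * t / 2))
          * Real.exp (-(B * t + Real.sqrt A * (ξ' + y) * (Real.cosh (Real.sqrt A * t / 2) / Real.sinh (Real.sqrt A * t / 2)) + F ξ' - F y) / (2 * σ))
          * (C₁ * besselI β (Real.sqrt (A * y) * Real.sqrt ξ' / (σ * Real.sinh (Real.sqrt A * t / 2))) + C₂ * besselI (-β) (Real.sqrt (A * y) * Real.sqrt ξ' / (σ * Real.sinh (Real.sqrt A * t / 2))))) := funext fun ξ' => by rw [hp t ξ', hsqrtA ξ']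
    have hu := ((Real.hasDerivAt_sqrt hξne).const_mul (Real.sqrt (A * y))).div_const (2 * σ * Real.sinh (Real.sqrt A * t / 2))
    have hinner2 := (((((hasDerivAt_const ξ (B * t)).add
        ((((hasDerivAt_id ξ).add_const y).const_mul (Real.sqrt A)).mul_const (Real.cosh (Real.sqrt A * t / 2) / Real.sinh (Real.sqrt A * t / 2)))).add
        (hF ξ hξ)).sub_const (F y)).neg).div_const (2 * σ)
    have hE := hinner2.exp
    have hargx := ((Real.hasDerivAt_sqrt hξne).const_mul (Real.sqrt (A * y))).div_const (σ * Real.sinh (Real.sqrt A * t / 2))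
    have hzξ : 0 < Real.sqrt (A * y) * Real.sqrt ξ / (σ * Real.sinh (Real.sqrt A * t / 2)) := by positivity
    have hGd := (((hasDerivAt_besselI β hβint hzξ).comp ξ hargx).const_mul C₁).add
      (((hasDerivAt_besselI (-β) hβneg hzξ).comp ξ hargx).const_mul C₂)
    have H : HasDerivAt (fun ξ' =>
        Real.sqrt (A * y) * Real.sqrt ξ' / (2 * σ * Real.sinh (Real.sqrt A * t / 2))
          * Real.exp (-(B * t + Real.sqrt A * (ξ' + y) * (Real.cosh (Real.sqrt A * t / 2) / Real.sinh (Real.sqrt A * t / 2)) + F ξ' - F y) / (2 * σ))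
          * (C₁ * besselI β (Real.sqrt (A * y) * Real.sqrt ξ' / (σ * Real.sinh (Real.sqrt A * t / 2))) + C₂ * besselI (-β) (Real.sqrt (A * y) * Real.sqrt ξ' / (σ * Real.sinh (Real.sqrt A * t / 2))))) _ ξ := (hu.mul hE).mul hGd
    rw [hφx]
    convert H using 1
    simp only [id_eq, Pi.add_apply, Pi.neg_apply, Pi.sub_apply, Pi.mul_apply]
    ring
  have hsqx := Real.hasDerivAt_sqrt hxne
  have hEinner := (((((hasDerivAt_const x (B * t)).add
      ((((hasDerivAt_id x).add_const y).const_mul (Real.sqrt A)).mul_const (Real.cosh (Real.sqrt A * t / 2) / Real.sinh (Real.sqrt A * t / 2)))).add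
      (hF x hx)).sub_const (F y)).neg).div_const (2 * σ)
  have hEx := hEinner.exp
  have hargx2 := (hsqx.const_mul (Real.sqrt (A * y))).div_const (σ * Real.sinh (Real.sqrt A * t / 2))
  have hzx : 0 < Real.sqrt (A * y) * Real.sqrt x / (σ * Real.sinh (Real.sqrt A * t / 2)) := by positivity
  have hG0x := (((hasDerivAt_besselI β hβint hzx).comp x hargx2).const_mul C₁).add
    (((hasDerivAt_besselI (-β) hβneg hzx).comp x hargx2).const_mul C₂)
  have hG1x := (((hasDerivAt_bI' β hβint hzx).comp x hargx2).const_mul C₁).add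
    (((hasDerivAt_bI' (-β) hβneg hzx).comp x hargx2).const_mul C₂)
  have hT1 := ((hasDerivAt_const x (Real.sqrt (A * y))).div (hsqx.const_mul (4 * σ * Real.sinh (Real.sqrt A * t / 2)))
    (by positivity)).mul hG0x
  have hux := (hsqx.const_mul (Real.sqrt (A * y))).div_const (2 * σ * Real.sinh (Real.sqrt A * t / 2))
  have hquot := ((hf x hx).hasDerivAt).div (hasDerivAt_id x) hxne
  have hεx := ((hasDerivAt_const x (Real.sqrt A * (Real.cosh (Real.sqrt A * t / 2) / Real.sinh (Real.sqrt A * t / 2)))).add hquot).neg.div_const (2 * σ)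
  have hT2 := (hux.mul hεx).mul hG0x
  have hT3 := (hux.mul hG1x).mul ((hasDerivAt_const x (Real.sqrt (A * y))).div
    (hsqx.const_mul (2 * σ * Real.sinh (Real.sqrt A * t / 2))) (by positivity))
  have HX2 : HasDerivAt (fun ξ => Real.exp (-(B * t + Real.sqrt A * (ξ + y) * (Real.cosh (Real.sqrt A * t / 2) / Real.sinh (Real.sqrt A * t / 2)) + F ξ - F y) / (2 * σ)) * (Real.sqrt (A * y) / (4 * σ * Real.sinh (Real.sqrt A * t / 2) * Real.sqrt ξ) * (C₁ * besselI β (Real.sqrt (A * y) * Real.sqrt ξ / (σ * Real.sinh (Real.sqrt A * t / 2))) + C₂ * besselI (-β) (Real.sqrt (A * y) * Real.sqrt ξ / (σ * Real.sinh (Real.sqrt A * t / 2)))) + Real.sqrt (A * y) * Real.sqrt ξ / (2 * σ * Real.sinh (Real.sqrt A * t / 2)) * (-(Real.sqrt A * (Real.cosh (Real.sqrt A * t / 2) / Real.sinh (Real.sqrt A * t / 2)) + f ξ / ξ) / (2 * σ)) * (C₁ * besselI β (Real.sqrt (A * y) * Real.sqrt ξ / (σ * Real.sinh (Real.sqrt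 A * t / 2))) + C₂ * besselI (-β) (Real.sqrt (A * y) * Real.sqrt ξ / (σ * Real.sinh (Real.sqrt A * t / 2)))) + Real.sqrt (A * y) * Real.sqrt ξ / (2 * σ * Real.sinh (Real.sqrt A * t / 2)) * (C₁ * bI' β (Real.sqrt (A * y) * Real.sqrt ξ / (σ * Real.sinh (Real.sqrt A * t / 2))) + C₂ * bI' (-β) (Real.sqrt (A * y) * Real.sqrt ξ / (σ * Real.sinh (Real.sqrt A * t / 2)))) * (Real.sqrt (A * y) / (2 * σ * Real.sinh (Real.sqrt A * t / 2) * Real.sqrt ξ)))) _ x := hEx.mul ((hT1.add hT2).add hT3)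
  have hd1ev : deriv (fun ξ' => p t ξ') =ᶠ[nhds x] (fun ξ => Real.exp (-(B * t + Real.sqrt A * (ξ + y) * (Real.cosh (Real.sqrt A * t / 2) / Real.sinh (Real.sqrt A * t / 2)) + F ξ - F y) / (2 * σ)) * (Real.sqrt (A * y) / (4 * σ * Real.sinh (Real.sqrt A * t / 2) * Real.sqrt ξ) * (C₁ * besselI β (Real.sqrt (A * y) * Real.sqrt ξ / (σ * Real.sinh (Real.sqrt A * t / 2))) + C₂ * besselI (-β) (Real.sqrt (A * y) * Real.sqrt ξ / (σ * Real.sinh (Real.sqrt A * t / 2)))) + Real.sqrt (A * y) * Real.sqrt ξ / (2 * σ * Real.sinh (Real.sqrt A * t / 2)) * (-(Real.sqrt A * (Real.cosh (Real.sqrt A * t / 2) / Real.sinh (Real.sqrt A * t / 2)) + f ξ / ξ) / (2 * σ)) * (C₁ * besselI β (Real.sqrt (A * y) * Real.sqrt ξ / (σ * Real.sinh (Real.sqrt A * t / 2))) + C₂ * besselI (-β) (Real.sqrt (A * y) * Real.sqrt ξ / (σ * Real.sinh (Real.sqrt A * t / 2)))) + Real.sqrt (A * y) * Real.sqrt ξ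 / (2 * σ * Real.sinh (Real.sqrt A * t / 2)) * (C₁ * bI' β (Real.sqrt (A * y) * Real.sqrt ξ / (σ * Real.sinh (Real.sqrt A * t / 2))) + C₂ * bI' (-β) (Real.sqrt (A * y) * Real.sqrt ξ / (σ * Real.sinh (Real.sqrt A * t / 2)))) * (Real.sqrt (A * y) / (2 * σ * Real.sinh (Real.sqrt A * t / 2) * Real.sqrt ξ)))) := by
    filter_upwards [Ioi_mem_nhds hx] with ξ hξ
    exact (hX1 ξ hξ).deriv
  rw [show deriv (deriv fun ξ => p t ξ) x = deriv (fun ξ => Real.exp (-(B * t + Real.sqrt A * (ξ + y) * (Real.cosh (Real.sqrt A * t / 2) / Real.sinh (Real.sqrt A * t / 2)) + F ξ - F y) / (2 * σ)) * (Real.sqrt (A * y) / (4 * σ * Real.sinh (Real.sqrt A * t / 2) * Real.sqrt ξ) * (C₁ * besselI β (Real.sqrt (A * y) * Real.sqrt ξ / (σ * Real.sinh (Real.sqrt A * t / 2))) + C₂ * besselI (-β) (Real.sqrt (A * y) * Real.sqrt ξ / (σ * Real.sinh (Real.sqrt A * t / 2)))) + Real.sqrt (A * y) * Real.sqrt ξ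 / (2 * σ * Real.sinh (Real.sqrt A * t / 2)) * (-(Real.sqrt A * (Real.cosh (Real.sqrt A * t / 2) / Real.sinh (Real.sqrt A * t / 2)) + f ξ / ξ) / (2 * σ)) * (C₁ * besselI β (Real.sqrt (A * y) * Real.sqrt ξ / (σ * Real.sinh (Real.sqrt A * t / 2))) + C₂ * besselI (-β) (Real.sqrt (A * y) * Real.sqrt ξ / (σ * Real.sinh (Real.sqrt A * t / 2)))) + Real.sqrt (A * y) * Real.sqrt ξ / (2 * σ * Real.sinh (Real.sqrt A * t / 2)) * (C₁ * bI' β (Real.sqrt (A * y) * Real.sqrt ξ / (σ * Real.sinh (Real.sqrt A * t / 2))) + C₂ * bI' (-β) (Real.sqrt (A * y) * Real.sqrt ξ / (σ * Real.sinh (Real.sqrt A * t / 2)))) * (Real.sqrt (A * y) / (2 * σ * Real.sinh (Real.sqrt A * t / 2) * Real.sqrt ξ)))) x from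
    Filter.EventuallyEq.deriv_eq hd1ev]
  rw [HX2.deriv, (hX1 x hx).deriv, hp t x, hsqrtA x]
  simp only [id_eq, Function.comp_apply, Pi.add_apply, Pi.neg_apply, Pi.sub_apply, Pi.mul_apply, Pi.div_apply]
  have hch2 : Real.cosh (Real.sqrt A * t / 2) ^ 2 = Real.sinh (Real.sqrt A * t / 2) ^ 2 + 1 :=
    Real.cosh_sq _
  have hs2 : Real.sqrt A ^ 2 = A := Real.sq_sqrt hA.le
  have hK2 : Real.sqrt (A * y) ^ 2 = A * y := Real.sq_sqrt hAy.le
  have hR2 : Real.sqrt x ^ 2 = x := Real.sq_sqrt hx.le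
  have hβ2 : β ^ 2 * σ ^ 2 = σ ^ 2 + 2 * C := by
    rw [hβ]
    rw [div_pow, Real.sq_sqrt hC.le]
    field_simp
  have hRic' := hRic x hx
  have hzx2 : 0 < Real.sqrt (A * y) * Real.sqrt x / (σ * Real.sinh (Real.sqrt A * t / 2)) := by positivity
  have ho1 := besselI_ode β hβint hzx2
  have ho2 : (Real.sqrt (A * y) * Real.sqrt x / (σ * Real.sinh (Real.sqrt A * t / 2))) ^ 2
        * bI'' (-β) (Real.sqrt (A * y) * Real.sqrt x / (σ * Real.sinh (Real.sqrt A * t / 2)))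
      + (Real.sqrt (A * y) * Real.sqrt x / (σ * Real.sinh (Real.sqrt A * t / 2)))
        * bI' (-β) (Real.sqrt (A * y) * Real.sqrt x / (σ * Real.sinh (Real.sqrt A * t / 2)))
      = ((Real.sqrt (A * y) * Real.sqrt x / (σ * Real.sinh (Real.sqrt A * t / 2))) ^ 2 + β ^ 2)
        * besselI (-β) (Real.sqrt (A * y) * Real.sqrt x / (σ * Real.sinh (Real.sqrt A * t / 2))) := by
    have := besselI_ode (-β) hβneg hzx2
    rwa [neg_sq] at this
  set sQ := Real.sqrt A with hsQ
  set SH := Real.sinh (sQ * t / 2) with hSHd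
  set CH := Real.cosh (sQ * t / 2) with hCHd
  set KQ := Real.sqrt (A * y) with hKQ
  set RX := Real.sqrt x with hRX
  set EE := Real.exp (-(B * t + sQ * (x + y) * (CH / SH) + F x - F y) / (2 * σ)) with hEE
  set ZZ := KQ * RX / (σ * SH) with hZZ
  set a0 := besselI β ZZ with ha0
  set a1 := bI' β ZZ with ha1
  set a2 := bI'' β ZZ with ha2
  set c0 := besselI (-β) ZZ with hc0
  set c1 := bI' (-β) ZZ with hc1
  set c2 := bI'' (-β) ZZ with hc2
  set fv := f x with hfv
  set fd := deriv f x with hfd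
  rw [hZZ] at ho1 ho2
  have hSHne : SH ≠ 0 := ne_of_gt hsh
  have hRXne : RX ≠ 0 := ne_of_gt hrx
  have hKQne : KQ ≠ 0 := ne_of_gt hK
  field_simp at ho1 ho2 ⊢
  refine mul_left_cancel₀ (show ((-2)*KQ^4*RX^4*σ*x : ℝ) ≠ 0 by simp [hKQne, hRXne, hσ', hxne]) ?_
  linear_combination
    ((8)*C₁*EE*KQ^5*RX^4*σ*x^3) * ho1 +
    ((8)*C₂*EE*KQ^5*RX^4*σ*x^3) * ho2 +
    ((-16)*C₁*EE*KQ^5*RX^8*SH^2*a0*σ*x + (-16)*C₂*EE*KQ^5*RX^8*SH^2*c0*σ*x) * hRic' +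
    ((8)*C₁*EE*KQ^5*RX^8*SH^2*a0*σ*x + (8)*C₂*EE*KQ^5*RX^8*SH^2*c0*σ*x) * hβ2 +
    ((8)*A*C₁*EE*KQ^5*RX^8*SH^2*a0*σ*x^2 + (8)*A*C₁*EE*KQ^5*RX^10*SH^2*a0*σ*x + (8)*A*C₁*EE*KQ^5*RX^12*SH^2*a0*σ + (8)*A*C₂*EE*KQ^5*RX^8*SH^2*c0*σ*x^2 + (8)*A*C₂*EE*KQ^5*RX^10*SH^2*c0*σ*x + (8)*A*C₂*EE*KQ^5*RX^12*SH^2*c0*σ + (16)*C₁*CH*EE*KQ^5*RX^6*SH*a0*sQ*σ^2*x^2 + (16)*C₁*CH*EE*KQ^6*RX^7*a1*sQ*σ*x^2 + (8)*C₁*CH^2*EE*KQ^5*RX^8*a0*sQ^2*σ*x*y + (8)*C₁*CH^2*EE*KQ^5*RX^10*a0*sQ^2*σ*y + (-8)*C₁*EE*KQ^5*RX^4*SH^2*a0*β^2*σ^3*x^2 + (8)*C₁*EE*KQ^5*RX^4*SH^2*a0*σ^3*x^2 + (-8)*C₁*EE*KQ^5*RX^6*SH^2*a0*β^2*σ^3*x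 + (8)*C₁*EE*KQ^5*RX^6*SH^2*a0*σ^3*x + (-8)*C₁*EE*KQ^5*RX^8*SH^2*a0*sQ^2*σ*x*y + (-8)*C₁*EE*KQ^5*RX^8*SH^2*a0*sQ^2*σ*x^2 + (-8)*C₁*EE*KQ^5*RX^10*SH^2*a0*sQ^2*σ*x + (-8)*C₁*EE*KQ^5*RX^10*SH^2*a0*sQ^2*σ*y + (-8)*C₁*EE*KQ^5*RX^12*SH^2*a0*sQ^2*σ + (-8)*C₁*EE*KQ^7*RX^6*a0*σ*x^2 + (-8)*C₁*EE*KQ^7*RX^8*a0*σ*x + (-8)*C₁*EE*KQ^7*RX^10*a0*σ + (16)*C₂*CH*EE*KQ^5*RX^6*SH*c0*sQ*σ^2*x^2 + (16)*C₂*CH*EE*KQ^6*RX^7*c1*sQ*σ*x^2 + (8)*C₂*CH^2*EE*KQ^5*RX^8*c0*sQ^2*σ*x*y + (8)*C₂*CH^2*EE*KQ^5*RX^10*c0*sQ^2*σ*y + (-8)*C₂*EE*KQ^5*RX^4*SH^2*β^2*c0*σ^3*x^2 + (8)*C₂*EE*KQ^5*RX^4*SH^2*c0*σ^3*x^2 +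 (-8)*C₂*EE*KQ^5*RX^6*SH^2*β^2*c0*σ^3*x + (8)*C₂*EE*KQ^5*RX^6*SH^2*c0*σ^3*x + (-8)*C₂*EE*KQ^5*RX^8*SH^2*c0*sQ^2*σ*x*y + (-8)*C₂*EE*KQ^5*RX^8*SH^2*c0*sQ^2*σ*x^2 + (-8)*C₂*EE*KQ^5*RX^10*SH^2*c0*sQ^2*σ*x + (-8)*C₂*EE*KQ^5*RX^10*SH^2*c0*sQ^2*σ*y + (-8)*C₂*EE*KQ^5*RX^12*SH^2*c0*sQ^2*σ + (-8)*C₂*EE*KQ^7*RX^6*c0*σ*x^2 + (-8)*C₂*EE*KQ^7*RX^8*c0*σ*x + (-8)*C₂*EE*KQ^7*RX^10*c0*σ) * hR2 +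
    ((-8)*A*C₁*CH^2*EE*KQ*RX^12*a0*sQ^2*σ*y^2 + (8)*A*C₁*EE*KQ*RX^12*SH^2*a0*sQ^2*σ*y^2 + (8)*A*C₁*EE*KQ*RX^14*SH^2*a0*sQ^2*σ*y + (8)*A*C₁*EE*KQ^3*RX^12*a0*σ*y + (-8)*A*C₁*EE*KQ^3*RX^14*SH^2*a0*σ + (-8)*A*C₂*CH^2*EE*KQ*RX^12*c0*sQ^2*σ*y^2 + (8)*A*C₂*EE*KQ*RX^12*SH^2*c0*sQ^2*σ*y^2 + (8)*A*C₂*EE*KQ*RX^14*SH^2*c0*sQ^2*σ*y + (8)*A*C₂*EE*KQ^3*RX^12*c0*σ*y + (-8)*A*C₂*EE*KQ^3*RX^14*SH^2*c0*σ + (8)*A^2*C₁*EE*KQ*RX^12*a0*σ*y^2 + (-8)*A^2*C₁*EE*KQ*RX^14*SH^2*a0*σ*y + (8)*A^2*C₂*EE*KQ*RX^12*c0*σ*y^2 + (-8)*A^2*C₂*EE*KQ*RX^14*SH^2*c0*σ*y + (-8)*C₁*CH^2*EE*KQ^3*RX^12*a0*sQ^2*σ*y + (8)*C₁*EE*KQ^3*RX^12*SH^2*a0*sQ^2*σ*y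 + (8)*C₁*EE*KQ^3*RX^14*SH^2*a0*sQ^2*σ + (8)*C₁*EE*KQ^5*RX^12*a0*σ + (-8)*C₂*CH^2*EE*KQ^3*RX^12*c0*sQ^2*σ*y + (8)*C₂*EE*KQ^3*RX^12*SH^2*c0*sQ^2*σ*y + (8)*C₂*EE*KQ^3*RX^14*SH^2*c0*sQ^2*σ + (8)*C₂*EE*KQ^5*RX^12*c0*σ) * hK2 +
    ((8)*A*C₁*CH^2*EE*KQ*RX^12*a0*sQ^2*σ*y^3 + (-8)*A*C₁*EE*KQ*RX^12*SH^2*a0*sQ^2*σ*y^3 + (-8)*A*C₁*EE*KQ*RX^12*a0*sQ^2*σ*y^3 + (8)*A*C₂*CH^2*EE*KQ*RX^12*c0*sQ^2*σ*y^3 + (-8)*A*C₂*EE*KQ*RX^12*SH^2*c0*sQ^2*σ*y^3 + (-8)*A*C₂*EE*KQ*RX^12*c0*sQ^2*σ*y^3 + (-8)*A^2*C₁*EE*KQ*RX^12*a0*σ*y^3 + (8)*A^2*C₁*EE*KQ*RX^14*SH^2*a0*σ*y^2 + (-8)*A^2*C₂*EE*KQ*RX^12*c0*σ*y^3 + (8)*A^2*C₂*EE*KQ*RX^14*SH^2*c0*σ*y^2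 + (8)*C₁*CH^2*EE*KQ*RX^12*a0*sQ^4*σ*y^3 + (-8)*C₁*EE*KQ*RX^12*SH^2*a0*sQ^4*σ*y^3 + (-8)*C₁*EE*KQ*RX^12*a0*sQ^4*σ*y^3 + (8)*C₂*CH^2*EE*KQ*RX^12*c0*sQ^4*σ*y^3 + (-8)*C₂*EE*KQ*RX^12*SH^2*c0*sQ^4*σ*y^3 + (-8)*C₂*EE*KQ*RX^12*c0*sQ^4*σ*y^3) * hs2 +
    ((-8)*C₁*EE*KQ*RX^12*a0*sQ^6*σ*y^3 + (-8)*C₂*EE*KQ*RX^12*c0*sQ^6*σ*y^3) * hch2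
end
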